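/- arXiv:1601.04157 — 9 statements merged into one kernel-verified Lean document; each statement's English description precedes it below -/
import Mathlib

section
/- Let ξ be a standard normal random variable (real-valued, with law N(0,1)), let k be a positive integer, and let 0 < h ≤ e^{-1}. Set A_h = √(2k·ln(1/h)) and let ζ_h be the truncation of ξ at level A_h, i.e. ζ_h = ξ if |ξ| ≤ A_h, ζ_h = A_h if ξ > A_h, and ζ_h = −A_h if ξ < −A_h. Then E[(ξ − ζ_h)²] ≤ h^k. -/
open MeasureTheory ProbabilityTheory

noncomputable def QQ (s : ℝ) : ℝ := (max s 0) ^ 2 * Real.exp (-(Real.sqrt 2 * max s 0))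

lemma QQ_nonneg (s : ℝ) : 0 ≤ QQ s := by unfold QQ; positivity

lemma QQ_eq_indicator :
    QQ = Set.indicator (Set.Ioi (0:ℝ)) (fun s => s ^ 2 * Real.exp (-(Real.sqrt 2 * s))) := by
  funext s
  rcases le_or_gt s 0 with hs | hs
  · rw [Set.indicator_of_notMem (by simpa using hs)]
    simp [QQ, max_eq_right hs]
  · rw [Set.indicator_of_mem (Set.mem_Ioi.mpr hs)]
    simp [QQ, max_eq_left hs.le]

lemma QQ_integrableOn :
    MeasureTheory.IntegrableOn (fun s : ℝ => s ^ 2 * Real.exp (-(Real.sqrt 2 * s)))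
      (Set.Ioi 0) := by
  have h := integrableOn_rpow_mul_exp_neg_mul_rpow (p := 1) (s := 2) (b := Real.sqrt 2)
    (by norm_num) (by norm_num) (by positivity)
  refine h.congr_fun (fun x hx => ?_) measurableSet_Ioi
  dsimp only
  rw [Real.rpow_one, neg_mul, show ((2:ℝ)) = ((2:ℕ):ℝ) by norm_num, Real.rpow_natCast]

lemma QQ_integrable : MeasureTheory.Integrable QQ := by
  rw [QQ_eq_indicator]
  exact (integrable_indicator_iff measurableSet_Ioi).mpr QQ_integrableOn

lemma QQ_integral_le : ∫ s, QQ s ≤ Real.sqrt 2 / 2 := by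
  have hs2 : (0:ℝ) < Real.sqrt 2 := Real.sqrt_pos.mpr (by norm_num)
  have h2 : Real.sqrt 2 ^ 2 = 2 := Real.sq_sqrt (by norm_num)
  have hval := Real.integral_rpow_mul_exp_neg_mul_Ioi (a := 3) (r := Real.sqrt 2)
    (by norm_num) hs2
  rw [QQ_eq_indicator, integral_indicator measurableSet_Ioi]
  have hcongr : ∫ s in Set.Ioi (0:ℝ), s ^ 2 * Real.exp (-(Real.sqrt 2 * s))
      = ∫ t in Set.Ioi (0:ℝ), t ^ ((3:ℝ) - 1) * Real.exp (-(Real.sqrt 2 * t)) := by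
    refine setIntegral_congr_fun measurableSet_Ioi (fun t ht => ?_)
    rw [show ((3:ℝ) - 1) = ((2:ℕ):ℝ) by norm_num, Real.rpow_natCast]
  rw [hcongr, hval]
  have hg : Real.Gamma 3 = 2 := by
    rw [show (3:ℝ) = ((2:ℕ):ℝ) + 1 by norm_num, Real.Gamma_nat_eq_factorial]
    norm_num
  rw [hg, show ((3:ℝ)) = ((3:ℕ):ℝ) by norm_num, Real.rpow_natCast]
  have h3 : Real.sqrt 2 ^ 3 = 2 * Real.sqrt 2 := by rw [pow_succ, h2]
  rw [div_pow, one_pow, h3]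
  apply le_of_eq
  field_simp
  nlinarith [h2]

set_option maxHeartbeats 1000000 in
/-- Truncating a standard Gaussian random variable `ξ` at level `A_h = √(2k ln(1/h))`
produces `ζ_h` with mean-square truncation error `E[(ξ − ζ_h)²] ≤ h^k`. -/
theorem gaussian_truncation_error {Ω : Type*} [MeasureSpace Ω]
    [IsProbabilityMeasure (ℙ : Measure Ω)]
    (ξ : Ω → ℝ) (hξ : Measurable ξ)
    (hlaw : Measure.map ξ ℙ = gaussianReal 0 1)
    (k : ℕ) (hk : 0 < k) (h : ℝ) (hh0 : 0 < h) (hh1 : h ≤ Real.exp (-1)) :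
    ∫ ω, (ξ ω - (if |ξ ω| ≤ Real.sqrt (2 * k * Real.log (1 / h)) then ξ ω
        else if ξ ω > Real.sqrt (2 * k * Real.log (1 / h)) then
          Real.sqrt (2 * k * Real.log (1 / h))
        else -Real.sqrt (2 * k * Real.log (1 / h)))) ^ 2 ∂ℙ ≤ h ^ k := by
  have hπ := Real.pi_gt_three
  set A : ℝ := Real.sqrt (2 * k * Real.log (1 / h)) with hAdef
  have hA0 : 0 ≤ A := Real.sqrt_nonneg _
  have hlog1 : 1 ≤ Real.log (1 / h) := by
    have hexp : Real.exp 1 ≤ 1 / h := by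
      rw [le_div_iff₀ hh0]
      calc Real.exp 1 * h ≤ Real.exp 1 * Real.exp (-1) :=
            mul_le_mul_of_nonneg_left hh1 (Real.exp_pos 1).le
        _ = 1 := by rw [← Real.exp_add]; norm_num
    calc (1:ℝ) = Real.log (Real.exp 1) := (Real.log_exp 1).symm
      _ ≤ Real.log (1 / h) := Real.log_le_log (Real.exp_pos 1) hexp
  have hk1 : (1:ℝ) ≤ (k:ℝ) := by exact_mod_cast hk
  have hA2 : A ^ 2 = 2 * k * Real.log (1 / h) := Real.sq_sqrt (by nlinarith)
  have hs2A : Real.sqrt 2 ≤ A := by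
    apply Real.sqrt_le_sqrt; nlinarith
  have hs2 : (0:ℝ) < Real.sqrt 2 := Real.sqrt_pos.mpr (by norm_num)
  have h2 : Real.sqrt 2 ^ 2 = 2 := Real.sq_sqrt (by norm_num)
  have hhk : Real.exp (-(A ^ 2) / 2) = h ^ k := by
    rw [hA2, one_div, Real.log_inv]
    rw [show -(2 * (k:ℝ) * -Real.log h) / 2 = (k:ℝ) * Real.log h by ring]
    rw [← Real.log_pow, Real.exp_log (by positivity)]
  set c : ℝ := (Real.sqrt (2 * Real.pi))⁻¹ with hcdef
  have hsq2pi : (0:ℝ) < Real.sqrt (2 * Real.pi) := Real.sqrt_pos.mpr (by nlinarith)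
  have hc0 : 0 < c := by rw [hcdef]; positivity
  have hpt : ∀ x : ℝ, (x - (if |x| ≤ A then x else if x > A then A else -A)) ^ 2
      = (max (|x| - A) 0) ^ 2 := by
    intro x
    rcases le_or_gt |x| A with hx | hx
    · rw [if_pos hx, max_eq_right (by linarith), sub_self]
    · rw [if_neg (not_le.mpr hx), max_eq_left (by linarith)]
      by_cases hxA : x > A
      · rw [if_pos hxA, abs_of_pos (lt_of_le_of_lt hA0 hxA)]
      · rw [if_neg hxA]
        have habs : |x| = -x := by
          rcases abs_cases x with ⟨h1, _⟩ | ⟨h1, _⟩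
          · exact absurd (h1 ▸ hx) hxA
          · exact h1
        rw [habs]; ring
  have step1 : ∫ ω, (ξ ω - (if |ξ ω| ≤ A then ξ ω else if ξ ω > A then A else -A)) ^ 2 ∂ℙ
      = ∫ x, (max (|x| - A) 0) ^ 2 ∂(gaussianReal 0 1) := by
    rw [← hlaw,
      integral_map (f := fun x : ℝ => (max (|x| - A) 0) ^ 2) hξ.aemeasurable
        (((continuous_abs.sub continuous_const).max continuous_const).pow 2).aestronglyMeasurable]
    exact integral_congr_ae (ae_of_all _ fun ω => hpt (ξ ω))
  have step2 : ∫ x, (max (|x| - A) 0) ^ 2 ∂(gaussianReal 0 1)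
      = ∫ x, gaussianPDFReal 0 1 x * (max (|x| - A) 0) ^ 2 := by
    rw [gaussianReal_of_var_ne_zero 0 one_ne_zero]
    rw [show (gaussianPDF 0 1) = fun x => ((gaussianPDFReal 0 1 x).toNNReal : ENNReal) from rfl]
    rw [integral_withDensity_eq_integral_smul (measurable_gaussianPDFReal 0 1).real_toNNReal _]
    congr 1; funext x
    rw [NNReal.smul_def, smul_eq_mul, Real.coe_toNNReal _ (gaussianPDFReal_nonneg 0 1 x)]
  have hint1 : Integrable (fun x : ℝ => QQ (x - A)) := QQ_integrable.comp_sub_right A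
  have hint2 : Integrable (fun x : ℝ => QQ (-x - A)) := by
    have := hint1.comp_neg
    simpa using this
  have hbound : ∀ x : ℝ, gaussianPDFReal 0 1 x * (max (|x| - A) 0) ^ 2
      ≤ h ^ k * (c * (QQ (x - A) + QQ (-x - A))) := by
    intro x
    have hQ1 := QQ_nonneg (x - A)
    have hQ2 := QQ_nonneg (-x - A)
    have hpdf : gaussianPDFReal 0 1 x = c * Real.exp (-x ^ 2 / 2) := by
      rw [hcdef]
      simp [gaussianPDFReal]
    rcases le_or_gt |x| A with hx | hx
    · have hrhs : (0:ℝ) ≤ h ^ k * (c * (QQ (x - A) + QQ (-x - A))) :=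
        mul_nonneg (by positivity) (mul_nonneg hc0.le (add_nonneg hQ1 hQ2))
      simpa [max_eq_right (show |x| - A ≤ 0 by linarith)] using hrhs
    · have ht : 0 < |x| - A := by linarith
      rw [max_eq_left (by linarith), hpdf]
      have hexple : Real.exp (-x ^ 2 / 2)
          ≤ Real.exp (-(A ^ 2) / 2) * Real.exp (-(Real.sqrt 2 * (|x| - A))) := by
        rw [← Real.exp_add]
        apply Real.exp_le_exp.mpr
        have hxx : x ^ 2 = (|x| - A + A) ^ 2 := by rw [sub_add_cancel, sq_abs]
        rw [hxx]
        nlinarith [mul_le_mul_of_nonneg_right hs2A ht.le, sq_nonneg (|x| - A)]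
      have hQval : QQ (|x| - A) = (|x| - A) ^ 2 * Real.exp (-(Real.sqrt 2 * (|x| - A))) := by
        simp [QQ, max_eq_left ht.le]
      have hQsum : QQ (|x| - A) ≤ QQ (x - A) + QQ (-x - A) := by
        rcases abs_cases x with ⟨h1, _⟩ | ⟨h1, _⟩ <;> rw [h1] <;> linarith
      calc c * Real.exp (-x ^ 2 / 2) * (|x| - A) ^ 2
          ≤ c * (Real.exp (-(A ^ 2) / 2) * Real.exp (-(Real.sqrt 2 * (|x| - A))))
              * (|x| - A) ^ 2 :=
            mul_le_mul_of_nonneg_right (mul_le_mul_of_nonneg_left hexple hc0.le)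
              (by positivity)
        _ = h ^ k * (c * QQ (|x| - A)) := by rw [hQval, ← hhk]; ring
        _ ≤ h ^ k * (c * (QQ (x - A) + QQ (-x - A))) :=
            mul_le_mul_of_nonneg_left (mul_le_mul_of_nonneg_left hQsum hc0.le)
              (by positivity)
  have hintRHS : Integrable (fun x : ℝ => h ^ k * (c * (QQ (x - A) + QQ (-x - A)))) :=
    ((hint1.add hint2).const_mul c).const_mul (h ^ k)
  have mono : ∫ x, gaussianPDFReal 0 1 x * (max (|x| - A) 0) ^ 2
      ≤ ∫ x, h ^ k * (c * (QQ (x - A) + QQ (-x - A))) := by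
    apply integral_mono_of_nonneg
    · exact ae_of_all _ fun x => mul_nonneg (gaussianPDFReal_nonneg 0 1 x) (by positivity)
    · exact hintRHS
    · exact ae_of_all _ hbound
  have e1 : ∫ x : ℝ, QQ (x - A) = ∫ s, QQ s := integral_sub_right_eq_self QQ A
  have e2 : (∫ x : ℝ, QQ (-x - A)) = ∫ s, QQ s := by
    have h3 := integral_neg_eq_self (μ := (volume : Measure ℝ)) (fun y : ℝ => QQ (y - A))
    simpa using h3.trans e1
  have hRHS : ∫ x, h ^ k * (c * (QQ (x - A) + QQ (-x - A)))
      = h ^ k * (c * (2 * ∫ s, QQ s)) := by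
    rw [integral_const_mul, integral_const_mul, integral_add hint1 hint2, e1, e2]
    ring
  have hfinal : h ^ k * (c * (2 * ∫ s, QQ s)) ≤ h ^ k := by
    have hQle := QQ_integral_le
    have hQint0 : 0 ≤ ∫ s, QQ s := integral_nonneg QQ_nonneg
    have h1 : Real.sqrt 2 ≤ Real.sqrt (2 * Real.pi) := Real.sqrt_le_sqrt (by nlinarith)
    have hcs : c * (2 * (Real.sqrt 2 / 2)) ≤ 1 := by
      rw [hcdef, show (2:ℝ) * (Real.sqrt 2 / 2) = Real.sqrt 2 by ring,
        inv_mul_le_iff₀ hsq2pi, mul_one]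
      exact h1
    have hhk0 : (0:ℝ) ≤ h ^ k := by positivity
    have hA1 : c * (2 * ∫ s, QQ s) ≤ 1 :=
      le_trans (mul_le_mul_of_nonneg_left (by linarith : 2 * ∫ s, QQ s ≤ 2 * (Real.sqrt 2 / 2))
        hc0.le) hcs
    calc h ^ k * (c * (2 * ∫ s, QQ s)) ≤ h ^ k * 1 := mul_le_mul_of_nonneg_left hA1 hhk0
      _ = h ^ k := mul_one _
  rw [step1, step2]
  exact (mono.trans hRHS.le).trans hfinal
end

section
/- Let I : ℝ^d → ℝ be twice continuously differentiable with ‖∇²I(z)‖ ≤ M (operator norm of the Hessian) for all z ∈ ℝ^d, and let δ, L > 0. Let x, y ∈ ℝ^d with δ ≤ |∇I(y)| ≤ L. If |I(y) − I(x)| ≤ δ⁴/(4ML²), then there exists λ ∈ ℝ such that I(y + λ∇I(y)) = I(x) and |λ| ≤ (2/δ²)·|I(y) − I(x)|. (Well-posedness of the projection step onto the level set {z : I(z) = I(x)} in direction ∇I(y).) -/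
open scoped RealInnerProductSpace

/-- Well-posedness of the projection step: if `I` is `C²` with Hessian bounded by `M`,
`δ ≤ |∇I(y)| ≤ L` and `|I(y) − I(x)| ≤ δ⁴/(4ML²)`, then there is `λ` with
`I(y + λ∇I(y)) = I(x)` and `|λ| ≤ (2/δ²)|I(y) − I(x)|`. -/
theorem projection_step_exists (d : ℕ) (I : EuclideanSpace ℝ (Fin d) → ℝ)
    (hI : ContDiff ℝ 2 I) (M δ L : ℝ) (hδ : 0 < δ) (hL : 0 < L)
    (hHess : ∀ z : EuclideanSpace ℝ (Fin d), ‖fderiv ℝ (fun w => gradient I w) z‖ ≤ M)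
    (x y : EuclideanSpace ℝ (Fin d))
    (hylb : δ ≤ ‖gradient I y‖) (hyub : ‖gradient I y‖ ≤ L)
    (hclose : |I y - I x| ≤ δ ^ 4 / (4 * M * L ^ 2)) :
    ∃ lam : ℝ, I (y + lam • gradient I y) = I x ∧
      |lam| ≤ (2 / δ ^ 2) * |I y - I x| := by
  set v := gradient I y with hv
  have hM0 : 0 ≤ M := le_trans (norm_nonneg _) (hHess y)
  rcases eq_or_lt_of_le hM0 with hM | hM
  · -- degenerate `M = 0` case: then `I y = I x`
    have h0 : |I y - I x| ≤ 0 := by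
      rw [← hM] at hclose; simpa using hclose
    have hIy : I y = I x := by
      have := le_antisymm h0 (abs_nonneg _)
      have := abs_eq_zero.mp this
      linarith
    refine ⟨0, by simpa using hIy, ?_⟩
    rw [abs_zero]
    positivity
  -- main case `0 < M`
  have hdiff : Differentiable ℝ I := hI.differentiable (by norm_num)
  have hgradCD : ContDiff ℝ 1 (fun w => gradient I w) := by
    have h1 : ContDiff ℝ 1 (fderiv ℝ I) := hI.fderiv_right (by norm_num)
    exact ((InnerProductSpace.toDual ℝ (EuclideanSpace ℝ (Fin d))).symm.contDiff).comp h1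
  have hgradDiff : Differentiable ℝ (fun w => gradient I w) := hgradCD.differentiable (by norm_num)
  have hLip : ∀ a b : EuclideanSpace ℝ (Fin d),
      ‖gradient I a - gradient I b‖ ≤ M * ‖a - b‖ := fun a b =>
    convex_univ.norm_image_sub_le_of_norm_fderiv_le (fun z _ => hgradDiff z)
      (fun z _ => hHess z) trivial trivial
  set g : ℝ → ℝ := fun t => I (y + t • v) with hg
  have hg' : ∀ t : ℝ, HasDerivAt g ⟪gradient I (y + t • v), v⟫ t := by
    intro t
    have hc : HasDerivAt (fun t : ℝ => y + t • v) v t := by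
      simpa using ((hasDerivAt_id t).smul_const v).const_add y
    have hf : HasFDerivAt I (fderiv ℝ I (y + t • v)) (y + t • v) :=
      (hdiff (y + t • v)).hasFDerivAt
    have h := hf.comp_hasDerivAt t hc
    exact h.congr_deriv (inner_gradient_left).symm
  set lam0 : ℝ := δ ^ 2 / (2 * M * L ^ 2) with hlam0
  have hlam0pos : 0 < lam0 := by positivity
  have hvδ : δ ≤ ‖v‖ := hylb
  have hvL : ‖v‖ ≤ L := hyub
  have hderiv_lb : ∀ t : ℝ, |t| ≤ lam0 → δ ^ 2 / 2 ≤ ⟪gradient I (y + t • v), v⟫ := by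
    intro t ht
    have h2 : |⟪gradient I (y + t • v) - v, v⟫| ≤ (M * (|t| * ‖v‖)) * ‖v‖ := by
      calc |⟪gradient I (y + t • v) - v, v⟫| ≤ ‖gradient I (y + t • v) - v‖ * ‖v‖ :=
            abs_real_inner_le_norm _ _
        _ ≤ (M * (|t| * ‖v‖)) * ‖v‖ := by
            have := hLip (y + t • v) y
            rw [hv]
            refine mul_le_mul_of_nonneg_right ?_ (norm_nonneg _)
            calc ‖gradient I (y + t • v) - gradient I y‖ ≤ M * ‖(y + t • v) - y‖ := this
              _ = M * (|t| * ‖v‖) := by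
                  rw [add_sub_cancel_left, norm_smul, Real.norm_eq_abs]
    have key : (M * (|t| * ‖v‖)) * ‖v‖ ≤ δ ^ 2 / 2 := by
      have h3 : (M * (|t| * ‖v‖)) * ‖v‖ ≤ (M * (lam0 * L)) * L := by
        gcongr <;> first | exact ht | exact hvL
      have h5 : (M * (lam0 * L)) * L = δ ^ 2 / 2 := by
        rw [hlam0]; field_simp
      linarith
    have hvv : δ ^ 2 ≤ ⟪v, v⟫ := by
      rw [real_inner_self_eq_norm_sq]
      exact pow_le_pow_left₀ hδ.le hvδ 2
    have hsplit : ⟪gradient I (y + t • v), v⟫ = ⟪v, v⟫ + ⟪gradient I (y + t • v) - v, v⟫ := by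
      rw [inner_sub_left]; ring
    have := neg_abs_le ⟪gradient I (y + t • v) - v, v⟫
    linarith
  have hgdiff : Differentiable ℝ g := fun t => (hg' t).differentiableAt
  have hgderiv : ∀ t : ℝ, deriv g t = ⟪gradient I (y + t • v), v⟫ := fun t => (hg' t).deriv
  have hgrow : ∀ a ∈ Set.Icc (-lam0) lam0, ∀ b ∈ Set.Icc (-lam0) lam0, a ≤ b →
      δ ^ 2 / 2 * (b - a) ≤ g b - g a := by
    refine (convex_Icc _ _).mul_sub_le_image_sub_of_le_deriv hgdiff.continuous.continuousOn
      hgdiff.differentiableOn ?_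
    intro t ht
    rw [hgderiv]
    refine hderiv_lb t ?_
    rw [interior_Icc] at ht
    exact abs_le.mpr ⟨ht.1.le, ht.2.le⟩
  have hg0 : g 0 = I y := by simp [hg]
  have hbound : δ ^ 2 / 2 * lam0 = δ ^ 4 / (4 * M * L ^ 2) := by
    rw [hlam0]; field_simp; ring
  have hmem0 : (0 : ℝ) ∈ Set.Icc (-lam0) lam0 := by
    constructor <;> [linarith; linarith]
  have hmemL : lam0 ∈ Set.Icc (-lam0) lam0 := by
    constructor <;> [linarith; linarith]
  have hmemN : -lam0 ∈ Set.Icc (-lam0) lam0 := by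
    constructor <;> [linarith; linarith]
  rcases le_or_gt (I y) (I x) with hcase | hcase
  · -- I x ≥ I y : search in [0, lam0]
    have habs : |I y - I x| = I x - I y := by rw [abs_sub_comm]; exact abs_of_nonneg (by linarith)
    have hup : I x ≤ g lam0 := by
      have := hgrow 0 hmem0 lam0 hmemL hlam0pos.le
      rw [hg0] at this
      have h6 : I x - I y ≤ δ ^ 4 / (4 * M * L ^ 2) := habs ▸ hclose
      rw [sub_zero] at this
      linarith [hbound ▸ this]
    obtain ⟨t, htmem, htval⟩ : ∃ t ∈ Set.Icc (0 : ℝ) lam0, g t = I x := by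
      have : I x ∈ Set.Icc (g 0) (g lam0) := ⟨hg0 ▸ hcase, hup⟩
      exact intermediate_value_Icc hlam0pos.le hgdiff.continuous.continuousOn this
    refine ⟨t, htval, ?_⟩
    have hsub : Set.Icc (0 : ℝ) lam0 ⊆ Set.Icc (-lam0) lam0 :=
      Set.Icc_subset_Icc (by linarith) le_rfl
    have := hgrow 0 hmem0 t (hsub htmem) htmem.1
    rw [hg0, htval, sub_zero] at this
    rw [abs_of_nonneg htmem.1, habs]
    rw [div_mul_eq_mul_div, le_div_iff₀ (by positivity)]
    nlinarith [sq_nonneg δ]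
  · -- I x < I y : search in [-lam0, 0]
    have habs : |I y - I x| = I y - I x := abs_of_nonneg (by linarith)
    have hdown : g (-lam0) ≤ I x := by
      have := hgrow (-lam0) hmemN 0 hmem0 (by linarith)
      rw [hg0, sub_neg_eq_add, zero_add] at this
      have h6 : I y - I x ≤ δ ^ 4 / (4 * M * L ^ 2) := habs ▸ hclose
      linarith [hbound ▸ this]
    obtain ⟨t, htmem, htval⟩ : ∃ t ∈ Set.Icc (-lam0) (0 : ℝ), g t = I x := by
      have : I x ∈ Set.Icc (g (-lam0)) (g 0) := ⟨hdown, hg0 ▸ hcase.le⟩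
      exact intermediate_value_Icc (by linarith) hgdiff.continuous.continuousOn this
    refine ⟨t, htval, ?_⟩
    have hsub : Set.Icc (-lam0) (0 : ℝ) ⊆ Set.Icc (-lam0) lam0 :=
      Set.Icc_subset_Icc le_rfl (by linarith)
    have := hgrow t (hsub htmem) 0 hmem0 htmem.2
    rw [hg0, htval, zero_sub] at this
    rw [abs_of_nonpos htmem.2, habs]
    rw [div_mul_eq_mul_div, le_div_iff₀ (by positivity)]
    nlinarith [sq_nonneg δ]
end

section
/- Let I : ℝ^d → ℝ be twice continuously differentiable with ‖∇²I(z)‖ ≤ M for all z ∈ ℝ^d, and let δ, L > 0 with M, δ, L > 0. Let x, y ∈ ℝ^d with δ ≤ |∇I(y)| ≤ L. If λ ∈ ℝ satisfies I(y + λ∇I(y)) = I(x) and |λ| ≤ δ²/(ML²), then |λ| ≤ (2/δ²)·|I(y) − I(x)|. (A priori bound on the projection parameter λ in the projection step.) -/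
open scoped RealInnerProductSpace

set_option maxHeartbeats 1000000 in
/-- A priori bound on the projection parameter: if `I` is `C²` with Hessian bounded by `M`,
`δ ≤ |∇I(y)| ≤ L`, and `λ` satisfies `I(y + λ∇I(y)) = I(x)` with `|λ| ≤ δ²/(ML²)`,
then `|λ| ≤ (2/δ²)|I(y) − I(x)|`. -/
theorem projection_step_lambda_bound (d : ℕ) (I : EuclideanSpace ℝ (Fin d) → ℝ)
    (hI : ContDiff ℝ 2 I) (M δ L : ℝ) (hM : 0 < M) (hδ : 0 < δ) (hL : 0 < L)
    (hHess : ∀ z : EuclideanSpace ℝ (Fin d), ‖fderiv ℝ (fun w => gradient I w) z‖ ≤ M)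
    (x y : EuclideanSpace ℝ (Fin d))
    (hylb : δ ≤ ‖gradient I y‖) (hyub : ‖gradient I y‖ ≤ L)
    (lam : ℝ) (hproj : I (y + lam • gradient I y) = I x)
    (hsmall : |lam| ≤ δ ^ 2 / (M * L ^ 2)) :
    |lam| ≤ (2 / δ ^ 2) * |I y - I x| := by
  set g : EuclideanSpace ℝ (Fin d) := gradient I y with hg
  set v : EuclideanSpace ℝ (Fin d) := lam • g with hv
  have hIdiff : Differentiable ℝ I := hI.differentiable (by norm_num)
  -- gradient is differentiable
  have hfd : Differentiable ℝ (fderiv ℝ I) :=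
    (hI.fderiv_right (m := 1) (by norm_num)).differentiable (by norm_num)
  have hgdiff : Differentiable ℝ (fun w => gradient I w) := by
    have := (((InnerProductSpace.toDual ℝ
        (EuclideanSpace ℝ (Fin d))).symm.toContinuousLinearEquiv :
        (EuclideanSpace ℝ (Fin d) →L[ℝ] ℝ) ≃L[ℝ]
        EuclideanSpace ℝ (Fin d)).differentiable).comp hfd
    exact this
  -- Lipschitz bound on the gradient
  have hlip : ∀ a b : EuclideanSpace ℝ (Fin d),
      ‖gradient I a - gradient I b‖ ≤ M * ‖a - b‖ := fun a b =>
    Convex.norm_image_sub_le_of_norm_fderiv_le (fun z _ => (hgdiff z))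
      (fun z _ => hHess z) convex_univ (Set.mem_univ b) (Set.mem_univ a)
  -- the auxiliary function along the segment
  set f : ℝ → ℝ := fun t => I (y + t • v) - I y - t * ⟪g, v⟫ with hf
  have hderiv : ∀ t : ℝ, HasDerivAt f (⟪gradient I (y + t • v) - g, v⟫) t := by
    intro t
    have hline : HasDerivAt (fun t : ℝ => y + t • v) v t := by
      simpa using ((hasDerivAt_id t).smul_const v).const_add y
    have hF : HasFDerivAt I ((InnerProductSpace.toDual ℝ (EuclideanSpace ℝ (Fin d)))
        (gradient I (y + t • v))) (y + t • v) :=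
      (hIdiff (y + t • v)).hasGradientAt.hasFDerivAt
    have h1 : HasDerivAt (fun t : ℝ => I (y + t • v)) (⟪gradient I (y + t • v), v⟫) t := by
      have h := hF.comp_hasDerivAt t hline
      rw [InnerProductSpace.toDual_apply_apply] at h
      exact h
    have h2 : HasDerivAt (fun t : ℝ => I y + t * ⟪g, v⟫) (⟪g, v⟫) t := by
      simpa using ((hasDerivAt_id t).mul_const (⟪g, v⟫)).const_add (I y)
    have h3 := h1.sub h2
    have h4 : (⟪gradient I (y + t • v), v⟫) - (⟪g, v⟫)
        = ⟪gradient I (y + t • v) - g, v⟫ := (inner_sub_left _ _ _).symm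
    rw [h4] at h3
    convert h3 using 2 with s
    · rfl
    · rfl
    ext s
    simp only [hf, Pi.sub_apply]; ring
  -- fencing bound
  have key : ∀ t ∈ Set.Icc (0:ℝ) 1, ‖f t‖ ≤ M * ‖v‖ ^ 2 / 2 * t ^ 2 := by
    refine image_norm_le_of_norm_deriv_right_le_deriv_boundary
      (f' := fun t => ⟪gradient I (y + t • v) - g, v⟫)
      (B := fun t => M * ‖v‖ ^ 2 / 2 * t ^ 2) (B' := fun t => M * ‖v‖ ^ 2 * t)
      ?_ ?_ ?_ ?_ ?_
    · exact fun t _ => (hderiv t).continuousAt.continuousWithinAt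
    · exact fun t _ => (hderiv t).hasDerivWithinAt
    · simp [hf]
    · intro t
      have h5 := (hasDerivAt_pow 2 t).const_mul (M * ‖v‖ ^ 2 / 2)
      convert h5 using 1
      · rfl
      · rfl
      push_cast
      ring
    · intro t ht
      have h1 : ‖(⟪gradient I (y + t • v) - g, v⟫)‖ ≤ ‖gradient I (y + t • v) - g‖ * ‖v‖ :=
        norm_inner_le_norm _ _
      have h2 : ‖gradient I (y + t • v) - g‖ ≤ M * (t * ‖v‖) := by
        have := hlip (y + t • v) y
        simpa [norm_smul, abs_of_nonneg ht.1] using this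
      calc ‖(⟪gradient I (y + t • v) - g, v⟫)‖ ≤ M * (t * ‖v‖) * ‖v‖ :=
            h1.trans (by
              have hvnn : (0:ℝ) ≤ ‖v‖ := norm_nonneg _
              nlinarith [norm_nonneg (gradient I (y + t • v) - g)])
        _ = M * ‖v‖ ^ 2 * t := by ring
  have hmain := key 1 (by norm_num)
  have hone : f 1 = I x - I y - ⟪g, v⟫ := by
    simp [hf, hv, ← hproj]
  rw [hone] at hmain
  have hinner : ⟪g, v⟫ = lam * ‖g‖ ^ 2 := by
    rw [hv, real_inner_smul_right, real_inner_self_eq_norm_sq]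
  have hnormv : ‖v‖ = |lam| * ‖g‖ := by rw [hv, norm_smul, Real.norm_eq_abs]
  rw [hinner, hnormv] at hmain
  -- now pure arithmetic
  have hgl : ‖g‖ ≤ L := hyub
  have hgd : δ ≤ ‖g‖ := hylb
  have habs : |I x - I y - lam * ‖g‖ ^ 2| ≤ M * (|lam| * ‖g‖) ^ 2 / 2 := by
    have h := hmain
    rw [Real.norm_eq_abs] at h
    nlinarith [h]
  have hsq : M * lam ^ 2 * L ^ 2 ≤ |lam| * δ ^ 2 := by
    have h1 : lam ^ 2 = |lam| * |lam| := by rw [← sq_abs]; ring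
    have h2 : (0:ℝ) < M * L ^ 2 := by positivity
    calc M * lam ^ 2 * L ^ 2 = (M * L ^ 2) * (|lam| * |lam|) := by rw [h1]; ring
      _ ≤ (M * L ^ 2) * ((δ ^ 2 / (M * L ^ 2)) * |lam|) := by
          apply mul_le_mul_of_nonneg_left _ (le_of_lt h2)
          exact mul_le_mul_of_nonneg_right hsmall (abs_nonneg _)
      _ = |lam| * δ ^ 2 := by field_simp
  have hlow : |lam| * ‖g‖ ^ 2 - |I x - I y| ≤ |I x - I y - lam * ‖g‖ ^ 2| := by
    have h1 := abs_sub_abs_le_abs_sub (lam * ‖g‖ ^ 2) (I x - I y)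
    have h2 : |lam * ‖g‖ ^ 2 - (I x - I y)| = |I x - I y - lam * ‖g‖ ^ 2| := abs_sub_comm _ _
    have h3 : |lam * ‖g‖ ^ 2| = |lam| * ‖g‖ ^ 2 := by
      rw [abs_mul, abs_of_nonneg (sq_nonneg ‖g‖)]
    linarith
  have hIxy : |I x - I y| = |I y - I x| := abs_sub_comm _ _
  have hgsq : δ ^ 2 ≤ ‖g‖ ^ 2 := by nlinarith
  have hgL : (|lam| * ‖g‖) ^ 2 ≤ lam ^ 2 * L ^ 2 := by
    have h4 : (|lam| * ‖g‖) ^ 2 = lam ^ 2 * ‖g‖ ^ 2 := by rw [mul_pow, sq_abs]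
    have h5 : ‖g‖ ^ 2 ≤ L ^ 2 := by nlinarith [norm_nonneg g]
    rw [h4]
    exact mul_le_mul_of_nonneg_left h5 (sq_nonneg lam)
  have e1 : |lam| * δ ^ 2 ≤ |lam| * ‖g‖ ^ 2 :=
    mul_le_mul_of_nonneg_left hgsq (abs_nonneg lam)
  have e2 : M * (|lam| * ‖g‖) ^ 2 ≤ M * (lam ^ 2 * L ^ 2) :=
    mul_le_mul_of_nonneg_left hgL hM.le
  have hfin : |lam| * δ ^ 2 / 2 ≤ |I y - I x| := by
    rw [← hIxy]
    linarith
  calc |lam| = (2 / δ ^ 2) * (|lam| * δ ^ 2 / 2) := by field_simp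
    _ ≤ (2 / δ ^ 2) * |I y - I x| := mul_le_mul_of_nonneg_left hfin (by positivity)
end

section
/- Let I : ℝ^d → ℝ be twice continuously differentiable with ‖∇²I(z)‖ ≤ M for all z ∈ ℝ^d, and let δ, L > 0. Let y ∈ ℝ^d with δ ≤ |∇I(y)| ≤ L. Then the function φ(λ) = I(y + λ∇I(y)) is strictly monotone increasing on the open interval (−δ²/(ML²), δ²/(ML²)); in particular, for any c ∈ ℝ there is at most one λ in this interval satisfying I(y + λ∇I(y)) = c. (Local uniqueness of the projection parameter λ in the projection step.) -/
open scoped RealInnerProductSpace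

/-- Local uniqueness of the projection parameter: `φ(λ) = I(y + λ∇I(y))` is strictly
monotone increasing on `(−δ²/(ML²), δ²/(ML²))`; in particular, for any `c` there is at most
one `λ` in this interval with `I(y + λ∇I(y)) = c`. -/
theorem projection_step_unique (d : ℕ) (I : EuclideanSpace ℝ (Fin d) → ℝ)
    (hI : ContDiff ℝ 2 I) (M δ L : ℝ) (hδ : 0 < δ) (hL : 0 < L)
    (hHess : ∀ z : EuclideanSpace ℝ (Fin d), ‖fderiv ℝ (fun w => gradient I w) z‖ ≤ M)
    (y : EuclideanSpace ℝ (Fin d))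
    (hylb : δ ≤ ‖gradient I y‖) (hyub : ‖gradient I y‖ ≤ L) :
    StrictMonoOn (fun lam : ℝ => I (y + lam • gradient I y))
      (Set.Ioo (-(δ ^ 2 / (M * L ^ 2))) (δ ^ 2 / (M * L ^ 2))) ∧
    ∀ c : ℝ, ∀ lam₁ ∈ Set.Ioo (-(δ ^ 2 / (M * L ^ 2))) (δ ^ 2 / (M * L ^ 2)),
      ∀ lam₂ ∈ Set.Ioo (-(δ ^ 2 / (M * L ^ 2))) (δ ^ 2 / (M * L ^ 2)),
      I (y + lam₁ • gradient I y) = c → I (y + lam₂ • gradient I y) = c →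
      lam₁ = lam₂ := by
  have hM0 : 0 ≤ M := le_trans (norm_nonneg _) (hHess 0)
  have hmain : StrictMonoOn (fun lam : ℝ => I (y + lam • gradient I y))
      (Set.Ioo (-(δ ^ 2 / (M * L ^ 2))) (δ ^ 2 / (M * L ^ 2))) := by
    rcases eq_or_lt_of_le hM0 with hM | hM
    · have h0 : δ ^ 2 / (M * L ^ 2) = 0 := by rw [← hM]; simp
      rw [h0]
      intro a ha
      exfalso
      have h' : -(0:ℝ) < a ∧ a < 0 := ha
      linarith [h'.1, h'.2]
    · -- M > 0
      set g := gradient I y with hg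
      have hdiffI : Differentiable ℝ I := hI.differentiable (by norm_num)
      -- gradient is differentiable
      have hfd1 : ContDiff ℝ 1 (fderiv ℝ I) := by
        have := (contDiff_succ_iff_fderiv.mp (by norm_num at hI ⊢; exact hI :
          ContDiff ℝ (1 + 1) I)).2
        exact this.2
      have hgradcd : ContDiff ℝ 1 (fun w => gradient I w) := by
        have : (fun w => gradient I w)
            = fun w => (InnerProductSpace.toDual ℝ (EuclideanSpace ℝ (Fin d))).symm
              (fderiv ℝ I w) := rfl
        rw [this]
        exact (InnerProductSpace.toDual ℝ
          (EuclideanSpace ℝ (Fin d))).symm.contDiff.comp hfd1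
      have hlip : ∀ x : EuclideanSpace ℝ (Fin d),
          ‖gradient I x - gradient I y‖ ≤ M * ‖x - y‖ := fun x =>
        convex_univ.norm_image_sub_le_of_norm_fderiv_le
          (fun z _ => (hgradcd.differentiable one_ne_zero).differentiableAt)
          (fun z _ => hHess z) trivial trivial
      -- derivative of φ
      have hderiv : ∀ lam : ℝ, HasDerivAt (fun t : ℝ => I (y + t • g))
          (⟪gradient I (y + lam • g), g⟫) lam := by
        intro lam
        have hc : HasDerivAt (fun t : ℝ => y + t • g) g lam := by
          simpa using ((hasDerivAt_id lam).smul_const g).const_add y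
        have hf : HasFDerivAt I (fderiv ℝ I (y + lam • g)) (y + lam • g) :=
          (hdiffI _).hasFDerivAt
        have := hf.comp_hasDerivAt lam hc
        refine this.congr_deriv (Eq.symm ?_)
        show ⟪(InnerProductSpace.toDual ℝ _).symm (fderiv ℝ I (y + lam • g)), g⟫
          = fderiv ℝ I (y + lam • g) g
        rw [InnerProductSpace.toDual_symm_apply]
      -- positivity of derivative on the interval
      have hpos : ∀ lam ∈ Set.Ioo (-(δ ^ 2 / (M * L ^ 2))) (δ ^ 2 / (M * L ^ 2)),
          0 < ⟪gradient I (y + lam • g), g⟫ := by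
        intro lam hlam
        have habs : |lam| < δ ^ 2 / (M * L ^ 2) := abs_lt.mpr ⟨by linarith [hlam.1], hlam.2⟩
        have hdist : ‖gradient I (y + lam • g) - g‖ ≤ M * (|lam| * ‖g‖) := by
          have := hlip (y + lam • g)
          simpa [norm_smul, abs_mul] using this
        have hinner : ⟪gradient I (y + lam • g), g⟫
            = ⟪g, g⟫ + ⟪gradient I (y + lam • g) - g, g⟫ := by
          rw [inner_sub_left]; ring
        have h1 : ‖g‖ ^ 2 ≥ δ ^ 2 := by
          have := hylb; nlinarith [norm_nonneg g]
        have h2 : |⟪gradient I (y + lam • g) - g, g⟫| ≤ M * (|lam| * ‖g‖) * ‖g‖ :=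
          le_trans (abs_real_inner_le_norm _ _)
            (mul_le_mul_of_nonneg_right hdist (norm_nonneg g))
        have h3 : M * (|lam| * ‖g‖) * ‖g‖ < δ ^ 2 := by
          have hML2 : 0 < M * L ^ 2 := by positivity
          have hkey : |lam| * (M * L ^ 2) < δ ^ 2 := (lt_div_iff₀ hML2).mp habs
          have hgL : ‖g‖ ^ 2 ≤ L ^ 2 := by nlinarith [norm_nonneg g]
          calc M * (|lam| * ‖g‖) * ‖g‖ = M * |lam| * ‖g‖ ^ 2 := by ring
            _ ≤ M * |lam| * L ^ 2 := by
                have := mul_nonneg hM.le (abs_nonneg lam)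
                nlinarith
            _ = |lam| * (M * L ^ 2) := by ring
            _ < δ ^ 2 := hkey
        have h4 : ⟪g, g⟫ = ‖g‖ ^ 2 := real_inner_self_eq_norm_sq g
        have := abs_le.mp h2
        rw [hinner, h4]
        linarith [this.1]
      apply strictMonoOn_of_deriv_pos (convex_Ioo _ _)
      · exact fun x _ => ((hderiv x).continuousAt).continuousWithinAt
      · intro x hx
        rw [interior_Ioo] at hx
        rw [(hderiv x).deriv]
        exact hpos x hx
  refine ⟨hmain, fun c lam₁ h₁ lam₂ h₂ e₁ e₂ => ?_⟩
  exact hmain.injOn h₁ h₂ (by rw [e₁, e₂])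
end

section
/- Let (Ω, F, P) be a probability space, x ∈ ℝ^d, and let X, X̂ : Ω → ℝ^d be square-integrable random vectors with I(X) = I(x) almost surely. Let I : ℝ^d → ℝ be twice continuously differentiable with |∇I(z)| ≤ L and ‖∇²I(z)‖ ≤ M for all z ∈ ℝ^d. Then |E[I(X̂) − I(x)]| ≤ L·|E[X̂ − X]| + (M/2)·E[|X̂ − X|²] + M·(E[|X − x|²])^{1/2}·(E[|X̂ − X|²])^{1/2}. -/
open MeasureTheory ProbabilityTheory
open scoped RealInnerProductSpace

section Aux

variable {E : Type*} [NormedAddCommGroup E] [InnerProductSpace ℝ E] [CompleteSpace E]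

lemma inner_gradient_eq' (I : E → ℝ) (z v : E) :
    ⟪gradient I z, v⟫ = fderiv ℝ I z v :=
  InnerProductSpace.toDual_symm_apply

lemma contDiff_gradient' {I : E → ℝ} (hI : ContDiff ℝ 2 I) :
    ContDiff ℝ 1 (fun z => gradient I z) :=
  (InnerProductSpace.toDual ℝ E).symm.contDiff.comp (hI.fderiv_right (by norm_num))

lemma gradient_lipschitz' {I : E → ℝ} (hI : ContDiff ℝ 2 I) {M : ℝ}
    (hHess : ∀ z, ‖fderiv ℝ (fun w => gradient I w) z‖ ≤ M) (u v : E) :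
    ‖gradient I u - gradient I v‖ ≤ M * ‖u - v‖ :=
  Convex.norm_image_sub_le_of_norm_fderiv_le
    (fun z _ => ((contDiff_gradient' hI).differentiable (by norm_num)).differentiableAt)
    (fun z _ => hHess z) convex_univ (Set.mem_univ v) (Set.mem_univ u)

lemma I_lipschitz' {I : E → ℝ} (hI : ContDiff ℝ 2 I) {L : ℝ}
    (hgrad : ∀ z, ‖gradient I z‖ ≤ L) (u v : E) :
    ‖I u - I v‖ ≤ L * ‖u - v‖ := by
  refine Convex.norm_image_sub_le_of_norm_fderiv_le
    (fun z _ => (hI.differentiable (by norm_num)).differentiableAt)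
    (fun z _ => ?_) convex_univ (Set.mem_univ v) (Set.mem_univ u)
  have : ‖fderiv ℝ I z‖ = ‖gradient I z‖ := by
    rw [show gradient I z = (InnerProductSpace.toDual ℝ E).symm (fderiv ℝ I z) from rfl,
      LinearIsometryEquiv.norm_map]
  rw [this]; exact hgrad z

lemma taylor_bound' {I : E → ℝ} (hI : ContDiff ℝ 2 I) {M : ℝ}
    (hHess : ∀ z, ‖fderiv ℝ (fun w => gradient I w) z‖ ≤ M) (a b : E) :
    |I b - I a - ⟪gradient I a, b - a⟫| ≤ M / 2 * ‖b - a‖ ^ 2 := by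
  set h : E := b - a with hh
  have hdiff : Differentiable ℝ I := hI.differentiable (by norm_num)
  have hline : ∀ t : ℝ, HasDerivAt (fun s : ℝ => a + s • h) h t := by
    intro t
    simpa using ((hasDerivAt_id t).smul_const h).const_add a
  have hφ : ∀ t : ℝ, HasDerivAt (fun s : ℝ => I (a + s • h)) (fderiv ℝ I (a + t • h) h) t :=
    fun t => (hdiff (a + t • h)).hasFDerivAt.comp_hasDerivAt t (hline t)
  have hcontf : Continuous fun z : E => fderiv ℝ I z := (hI.fderiv_right (m := 1) (by norm_num)).continuous
  have hcont : Continuous fun t : ℝ => fderiv ℝ I (a + t • h) h := by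
    exact (hcontf.comp (by continuity)).clm_apply continuous_const
  have e1 : a + (1 : ℝ) • h = b := by simp [hh]
  have e0 : a + (0 : ℝ) • h = a := by simp
  have key : I b - I a = ∫ t in (0:ℝ)..1, fderiv ℝ I (a + t • h) h := by
    have := intervalIntegral.integral_eq_sub_of_hasDerivAt (f := fun s : ℝ => I (a + s • h))
      (a := 0) (b := 1) (fun t _ => hφ t) (hcont.intervalIntegrable 0 1)
    rw [this]
    simp [hh]
  have hconst : ⟪gradient I a, h⟫ = ∫ _t in (0:ℝ)..1, fderiv ℝ I a h := by
    simp [inner_gradient_eq']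
  have hsplit : I b - I a - ⟪gradient I a, h⟫
      = ∫ t in (0:ℝ)..1, (fderiv ℝ I (a + t • h) h - fderiv ℝ I a h) := by
    rw [key, hconst, ← intervalIntegral.integral_sub (hcont.intervalIntegrable 0 1)
      intervalIntegrable_const]
  have hb : ∀ t ∈ Set.Icc (0:ℝ) 1,
      |fderiv ℝ I (a + t • h) h - fderiv ℝ I a h| ≤ (M * ‖h‖ ^ 2) * t := by
    intro t ht
    have heq : fderiv ℝ I (a + t • h) h - fderiv ℝ I a h
        = ⟪gradient I (a + t • h) - gradient I a, h⟫ := by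
      rw [inner_sub_left, inner_gradient_eq', inner_gradient_eq']
    rw [heq]
    calc |⟪gradient I (a + t • h) - gradient I a, h⟫|
        ≤ ‖gradient I (a + t • h) - gradient I a‖ * ‖h‖ := abs_real_inner_le_norm _ _
      _ ≤ (M * ‖(a + t • h) - a‖) * ‖h‖ := by
          gcongr
          exact gradient_lipschitz' hI hHess _ _
      _ = (M * ‖h‖ ^ 2) * t := by
          have : ‖(a + t • h) - a‖ = t * ‖h‖ := by
            rw [add_sub_cancel_left, norm_smul, Real.norm_eq_abs, abs_of_nonneg ht.1]
          rw [this]; ring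
  have hintabs : |∫ t in (0:ℝ)..1, (fderiv ℝ I (a + t • h) h - fderiv ℝ I a h)|
      ≤ ∫ t in (0:ℝ)..1, |fderiv ℝ I (a + t • h) h - fderiv ℝ I a h| :=
    intervalIntegral.abs_integral_le_integral_abs zero_le_one
  have hmono : (∫ t in (0:ℝ)..1, |fderiv ℝ I (a + t • h) h - fderiv ℝ I a h|)
      ≤ ∫ t in (0:ℝ)..1, (M * ‖h‖ ^ 2) * t := by
    refine intervalIntegral.integral_mono_on zero_le_one
      ((hcont.sub continuous_const).abs.intervalIntegrable 0 1)
      ((continuous_const.mul continuous_id).intervalIntegrable 0 1) hb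
  have hval : (∫ t in (0:ℝ)..1, (M * ‖h‖ ^ 2) * t) = M / 2 * ‖h‖ ^ 2 := by
    rw [intervalIntegral.integral_const_mul, integral_id]
    ring
  rw [hsplit]
  calc |∫ t in (0:ℝ)..1, (fderiv ℝ I (a + t • h) h - fderiv ℝ I a h)|
      ≤ ∫ t in (0:ℝ)..1, (M * ‖h‖ ^ 2) * t := le_trans hintabs hmono
    _ = M / 2 * ‖h‖ ^ 2 := hval

end Aux

/-- Bound on the mean deviation of the conserved quantity along the supporting
approximation: `|E[I(X̂) − I(x)]| ≤ L|E[X̂ − X]| + (M/2)E[|X̂ − X|²] +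
M (E[|X − x|²])^{1/2} (E[|X̂ − X|²])^{1/2}`. -/
theorem mean_invariant_deviation_bound {Ω : Type*} [MeasureSpace Ω]
    [IsProbabilityMeasure (ℙ : Measure Ω)]
    (d : ℕ) (x : EuclideanSpace ℝ (Fin d))
    (X Xhat : Ω → EuclideanSpace ℝ (Fin d))
    (hX : MemLp X 2 ℙ) (hXhat : MemLp Xhat 2 ℙ)
    (I : EuclideanSpace ℝ (Fin d) → ℝ) (hI : ContDiff ℝ 2 I) (L M : ℝ)
    (hgrad : ∀ z : EuclideanSpace ℝ (Fin d), ‖gradient I z‖ ≤ L)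
    (hHess : ∀ z : EuclideanSpace ℝ (Fin d), ‖fderiv ℝ (fun w => gradient I w) z‖ ≤ M)
    (hlevel : ∀ᵐ ω ∂(ℙ : Measure Ω), I (X ω) = I x) :
    |∫ ω, (I (Xhat ω) - I x) ∂(ℙ : Measure Ω)| ≤
      L * ‖∫ ω, (Xhat ω - X ω) ∂(ℙ : Measure Ω)‖ + (M / 2) * ∫ ω, ‖Xhat ω - X ω‖ ^ 2 ∂(ℙ : Measure Ω) +
      M * Real.sqrt (∫ ω, ‖X ω - x‖ ^ 2 ∂(ℙ : Measure Ω)) * Real.sqrt (∫ ω, ‖Xhat ω - X ω‖ ^ 2 ∂(ℙ : Measure Ω)) := by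
  have hM0 : 0 ≤ M := le_trans (norm_nonneg _) (hHess 0)
  -- basic Memℒp / integrability facts
  have hDm : MemLp (fun ω => Xhat ω - X ω) 2 ℙ := by exact hXhat.sub hX
  have hXxm : MemLp (fun ω => X ω - x) 2 ℙ := by exact hX.sub (memLp_const x)
  have hD1 : Integrable (fun ω => Xhat ω - X ω) ℙ := hDm.integrable one_le_two
  have hsq : Integrable (fun ω => ‖Xhat ω - X ω‖ ^ 2) ℙ := hDm.norm.integrable_sq
  have hXxsq : Integrable (fun ω => ‖X ω - x‖ ^ 2) ℙ := hXxm.norm.integrable_sq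
  have hprod : Integrable (fun ω => ‖X ω - x‖ * ‖Xhat ω - X ω‖) ℙ := by
    refine Integrable.mono' (hXxsq.add hsq) (hXxm.1.norm.mul hDm.1.norm) ?_
    filter_upwards with ω
    have h1 : 0 ≤ ‖X ω - x‖ * ‖Xhat ω - X ω‖ := mul_nonneg (norm_nonneg _) (norm_nonneg _)
    simp only [Pi.add_apply]
    rw [Real.norm_eq_abs, abs_of_nonneg h1]
    nlinarith [sq_nonneg (‖X ω - x‖ - ‖Xhat ω - X ω‖), norm_nonneg (X ω - x),
      norm_nonneg (Xhat ω - X ω)]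
  -- the three pieces
  set f1 : Ω → ℝ := fun ω => ⟪gradient I x, Xhat ω - X ω⟫ with hf1def
  set f2 : Ω → ℝ := fun ω => ⟪gradient I (X ω) - gradient I x, Xhat ω - X ω⟫ with hf2def
  set R : Ω → ℝ := fun ω => I (Xhat ω) - I (X ω) - ⟪gradient I (X ω), Xhat ω - X ω⟫ with hRdef
  have hgradcont : Continuous (fun z : EuclideanSpace ℝ (Fin d) => gradient I z) := (contDiff_gradient' hI).continuous
  have hf1int : Integrable f1 ℙ := hD1.const_inner _
  have hf2bound : ∀ ω, |f2 ω| ≤ M * (‖X ω - x‖ * ‖Xhat ω - X ω‖) := by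
    intro ω
    calc |f2 ω| ≤ ‖gradient I (X ω) - gradient I x‖ * ‖Xhat ω - X ω‖ :=
          abs_real_inner_le_norm _ _
      _ ≤ (M * ‖X ω - x‖) * ‖Xhat ω - X ω‖ := by
          gcongr
          exact gradient_lipschitz' hI hHess _ _
      _ = M * (‖X ω - x‖ * ‖Xhat ω - X ω‖) := by ring
  have hf2meas : AEStronglyMeasurable f2 ℙ :=
    ((hgradcont.comp_aestronglyMeasurable hX.1).sub aestronglyMeasurable_const).inner hDm.1
  have hf2int : Integrable f2 ℙ := by
    refine Integrable.mono' (hprod.const_mul M) hf2meas ?_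
    filter_upwards with ω
    simpa [Real.norm_eq_abs] using hf2bound ω
  have hRbound : ∀ ω, |R ω| ≤ M / 2 * ‖Xhat ω - X ω‖ ^ 2 := by
    intro ω
    simpa [hRdef] using taylor_bound' hI hHess (X ω) (Xhat ω)
  have hRmeas : AEStronglyMeasurable R ℙ := by
    have h1 : AEStronglyMeasurable (fun ω => I (Xhat ω)) ℙ :=
      hI.continuous.comp_aestronglyMeasurable hXhat.1
    have h2 : AEStronglyMeasurable (fun ω => I (X ω)) ℙ :=
      hI.continuous.comp_aestronglyMeasurable hX.1
    exact (h1.sub h2).sub ((hgradcont.comp_aestronglyMeasurable hX.1).inner hDm.1)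
  have hRint : Integrable R ℙ := by
    refine Integrable.mono' (hsq.const_mul (M / 2)) hRmeas ?_
    filter_upwards with ω
    simpa [Real.norm_eq_abs] using hRbound ω
  -- a.e. decomposition
  have hcongr : ∀ᵐ ω ∂(ℙ : Measure Ω), I (Xhat ω) - I x = f1 ω + f2 ω + R ω := by
    filter_upwards [hlevel] with ω hω
    rw [← hω]
    simp only [hf1def, hf2def, hRdef, inner_sub_left]
    ring
  have hsplit : (∫ ω, (I (Xhat ω) - I x) ∂(ℙ : Measure Ω))
      = (∫ ω, f1 ω ∂(ℙ : Measure Ω)) + (∫ ω, f2 ω ∂(ℙ : Measure Ω))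
        + (∫ ω, R ω ∂(ℙ : Measure Ω)) := by
    have h12 : Integrable (fun ω => f1 ω + f2 ω) ℙ := by exact hf1int.add hf2int
    rw [integral_congr_ae hcongr, integral_add h12 hRint, integral_add hf1int hf2int]
  -- bound each piece
  have hb1 : |∫ ω, f1 ω ∂(ℙ : Measure Ω)| ≤ L * ‖∫ ω, (Xhat ω - X ω) ∂(ℙ : Measure Ω)‖ := by
    have : (∫ ω, f1 ω ∂(ℙ : Measure Ω)) = ⟪gradient I x, ∫ ω, (Xhat ω - X ω) ∂(ℙ : Measure Ω)⟫ :=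
      integral_inner hD1 _
    rw [this]
    calc |⟪gradient I x, ∫ ω, (Xhat ω - X ω) ∂(ℙ : Measure Ω)⟫|
        ≤ ‖gradient I x‖ * ‖∫ ω, (Xhat ω - X ω) ∂(ℙ : Measure Ω)‖ := abs_real_inner_le_norm _ _
      _ ≤ L * ‖∫ ω, (Xhat ω - X ω) ∂(ℙ : Measure Ω)‖ := by gcongr; exact hgrad x
  have hb3 : |∫ ω, R ω ∂(ℙ : Measure Ω)| ≤ M / 2 * ∫ ω, ‖Xhat ω - X ω‖ ^ 2 ∂(ℙ : Measure Ω) := by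
    calc |∫ ω, R ω ∂(ℙ : Measure Ω)| ≤ ∫ ω, |R ω| ∂(ℙ : Measure Ω) := by
          simpa [Real.norm_eq_abs] using norm_integral_le_integral_norm R (μ := (ℙ : Measure Ω))
      _ ≤ ∫ ω, M / 2 * ‖Xhat ω - X ω‖ ^ 2 ∂(ℙ : Measure Ω) :=
          integral_mono hRint.abs (hsq.const_mul _) (fun ω => hRbound ω)
      _ = M / 2 * ∫ ω, ‖Xhat ω - X ω‖ ^ 2 ∂(ℙ : Measure Ω) := integral_const_mul _ _
  -- Cauchy–Schwarz step
  have hCS : (∫ ω, ‖X ω - x‖ * ‖Xhat ω - X ω‖ ∂(ℙ : Measure Ω))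
      ≤ Real.sqrt (∫ ω, ‖X ω - x‖ ^ 2 ∂(ℙ : Measure Ω))
        * Real.sqrt (∫ ω, ‖Xhat ω - X ω‖ ^ 2 ∂(ℙ : Measure Ω)) := by
    have hpq : Real.HolderConjugate 2 2 := Real.HolderConjugate.two_two
    have h2 : (ENNReal.ofReal (2:ℝ)) = 2 := by norm_num
    have := integral_mul_norm_le_Lp_mul_Lq (μ := (ℙ : Measure Ω))
      (f := fun ω => X ω - x) (g := fun ω => Xhat ω - X ω) hpq
      (by rw [h2]; exact hXxm) (by rw [h2]; exact hDm)
    have hrw : ∀ g : Ω → EuclideanSpace ℝ (Fin d), (∫ ω, ‖g ω‖ ^ (2:ℝ) ∂(ℙ : Measure Ω)) ^ ((1:ℝ)/2)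
        = Real.sqrt (∫ ω, ‖g ω‖ ^ 2 ∂(ℙ : Measure Ω)) := by
      intro g
      rw [Real.sqrt_eq_rpow]
      congr 1
      refine integral_congr_ae (Filter.Eventually.of_forall fun ω => ?_)
      simp [Real.rpow_two]
    rw [hrw, hrw] at this
    exact this
  have hb2 : |∫ ω, f2 ω ∂(ℙ : Measure Ω)|
      ≤ M * Real.sqrt (∫ ω, ‖X ω - x‖ ^ 2 ∂(ℙ : Measure Ω))
        * Real.sqrt (∫ ω, ‖Xhat ω - X ω‖ ^ 2 ∂(ℙ : Measure Ω)) := by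
    calc |∫ ω, f2 ω ∂(ℙ : Measure Ω)| ≤ ∫ ω, |f2 ω| ∂(ℙ : Measure Ω) := by
          simpa [Real.norm_eq_abs] using norm_integral_le_integral_norm f2 (μ := (ℙ : Measure Ω))
      _ ≤ ∫ ω, M * (‖X ω - x‖ * ‖Xhat ω - X ω‖) ∂(ℙ : Measure Ω) :=
          integral_mono hf2int.abs (hprod.const_mul M) (fun ω => hf2bound ω)
      _ = M * ∫ ω, ‖X ω - x‖ * ‖Xhat ω - X ω‖ ∂(ℙ : Measure Ω) := integral_const_mul _ _
      _ ≤ M * (Real.sqrt (∫ ω, ‖X ω - x‖ ^ 2 ∂(ℙ : Measure Ω))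
            * Real.sqrt (∫ ω, ‖Xhat ω - X ω‖ ^ 2 ∂(ℙ : Measure Ω))) := by
          exact mul_le_mul_of_nonneg_left hCS hM0
      _ = M * Real.sqrt (∫ ω, ‖X ω - x‖ ^ 2 ∂(ℙ : Measure Ω))
            * Real.sqrt (∫ ω, ‖Xhat ω - X ω‖ ^ 2 ∂(ℙ : Measure Ω)) := by ring
  rw [hsplit]
  calc |(∫ ω, f1 ω ∂(ℙ : Measure Ω)) + (∫ ω, f2 ω ∂(ℙ : Measure Ω)) + ∫ ω, R ω ∂(ℙ : Measure Ω)|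
      ≤ |∫ ω, f1 ω ∂(ℙ : Measure Ω)| + |∫ ω, f2 ω ∂(ℙ : Measure Ω)|
        + |∫ ω, R ω ∂(ℙ : Measure Ω)| := (abs_add_three _ _ _)
    _ ≤ _ := by
        have := hb1
        have := hb2
        have := hb3
        linarith
end

section
/- Let (Ω, F, P) be a probability space, x ∈ ℝ^d, and let X, X̂ : Ω → ℝ^d be square-integrable random vectors with I(X) = I(x) almost surely. Let I : ℝ^d → ℝ be twice continuously differentiable with δ ≤ |∇I(z)| ≤ L and ‖∇²I(z)‖ ≤ M for all z ∈ ℝ^d, where δ, L, M > 0. Let λ : Ω → ℝ be a random variable satisfying I(X̂ + λ∇I(X̂)) = I(x) almost surely and |λ| ≤ δ²/(ML²) almost surely. Then E[λ²] ≤ (4L²/δ⁴)·E[|X̂ − X|²]. -/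
open MeasureTheory ProbabilityTheory InnerProductSpace intervalIntegral
open scoped RealInnerProductSpace

section Aux
variable {E : Type*} [NormedAddCommGroup E] [InnerProductSpace ℝ E] [CompleteSpace E]

lemma grad_inner (I : E → ℝ) (z v : E) (h : DifferentiableAt ℝ I z) :
    ⟪gradient I z, v⟫ = fderiv ℝ I z v := by
  simp [gradient, toDual_symm_apply]

lemma grad_contDiff (I : E → ℝ) (hI : ContDiff ℝ 2 I) :
    ContDiff ℝ 1 (fun w => gradient I w) := by
  have h1 : ContDiff ℝ 1 (fderiv ℝ I) := hI.fderiv_right (by norm_num)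
  exact ((toDual ℝ E).symm.contDiff).comp h1

lemma grad_lip (I : E → ℝ) (hI : ContDiff ℝ 2 I) (M : ℝ)
    (hHess : ∀ z, ‖fderiv ℝ (fun w => gradient I w) z‖ ≤ M) (a b : E) :
    ‖gradient I b - gradient I a‖ ≤ M * ‖b - a‖ := by
  exact Convex.norm_image_sub_le_of_norm_fderiv_le
    (fun z _ => ((grad_contDiff I hI).differentiable (by norm_num) z))
    (fun z _ => hHess z) convex_univ trivial trivial

lemma quad_bound (I : E → ℝ) (hI : ContDiff ℝ 2 I) (M : ℝ) (hM : 0 ≤ M)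
    (hHess : ∀ z, ‖fderiv ℝ (fun w => gradient I w) z‖ ≤ M) (a v : E) :
    |I (a + v) - I a - ⟪gradient I a, v⟫| ≤ M / 2 * ‖v‖ ^ 2 := by
  have hdiff : Differentiable ℝ I := hI.differentiable (by norm_num)
  have hgc : Continuous (fun w => gradient I w) := (grad_contDiff I hI).continuous
  set g' : ℝ → ℝ := fun t => ⟪gradient I (a + t • v), v⟫ with hg'
  have hcont : Continuous g' := by
    apply Continuous.inner (hgc.comp (by continuity)) continuous_const
  have hderiv : ∀ t : ℝ, HasDerivAt (fun t => I (a + t • v)) (g' t) t := by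
    intro t
    have hline : HasDerivAt (fun t : ℝ => a + t • v) v t :=
      by simpa using ((hasDerivAt_id t).smul_const v).const_add a
    have := (hdiff (a + t • v)).hasFDerivAt.comp_hasDerivAt t hline
    simpa [g', grad_inner I _ v (hdiff _), Function.comp_def] using this
  have hftc : ∫ t in (0:ℝ)..1, g' t = I (a + v) - I a := by
    have := integral_eq_sub_of_hasDerivAt (f := fun t => I (a + t • v)) (f' := g')
      (fun t _ => hderiv t) (hcont.intervalIntegrable 0 1)
    simpa using this
  have hsplit : I (a + v) - I a - ⟪gradient I a, v⟫
      = ∫ t in (0:ℝ)..1, (g' t - ⟪gradient I a, v⟫) := by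
    rw [intervalIntegral.integral_sub (hcont.intervalIntegrable 0 1)
      (intervalIntegrable_const), hftc]
    simp
  rw [hsplit]
  have hb : ∀ᵐ t ∂(volume.restrict (Set.uIoc (0:ℝ) 1)),
      ‖g' t - ⟪gradient I a, v⟫‖ ≤ M * ‖v‖ ^ 2 * t := by
    refine ae_restrict_of_forall_mem measurableSet_uIoc ?_
    intro t ht
    rw [Set.uIoc_of_le (by norm_num)] at ht
    have h1 : g' t - ⟪gradient I a, v⟫ = ⟪gradient I (a + t • v) - gradient I a, v⟫ := by
      simp [g', inner_sub_left]
    rw [h1]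
    calc ‖⟪gradient I (a + t • v) - gradient I a, v⟫‖
        ≤ ‖gradient I (a + t • v) - gradient I a‖ * ‖v‖ := norm_inner_le_norm _ _
      _ ≤ (M * ‖t • v‖) * ‖v‖ := by
          gcongr
          simpa using grad_lip I hI M hHess a (a + t • v)
      _ = M * ‖v‖ ^ 2 * |t| := by
          rw [norm_smul]; simp [Real.norm_eq_abs]; ring
      _ = M * ‖v‖ ^ 2 * t := by rw [abs_of_pos ht.1]
  have hint : IntervalIntegrable (fun t => M * ‖v‖ ^ 2 * t) volume 0 1 := by
    apply Continuous.intervalIntegrable; continuity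
  calc |∫ t in (0:ℝ)..1, (g' t - ⟪gradient I a, v⟫)|
      ≤ |∫ t in (0:ℝ)..1, M * ‖v‖ ^ 2 * t| :=
        intervalIntegral.norm_integral_le_abs_of_norm_le hb hint
    _ = M / 2 * ‖v‖ ^ 2 := by
        rw [intervalIntegral.integral_const_mul, integral_id]
        rw [abs_of_nonneg (by positivity)]
        ring

end Aux
section Aux2
variable {E : Type*} [NormedAddCommGroup E] [InnerProductSpace ℝ E] [CompleteSpace E]

lemma pointwise_bound (I : E → ℝ) (hI : ContDiff ℝ 2 I)
    (δ L M : ℝ) (hδ : 0 < δ) (hL : 0 < L) (hM : 0 < M)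
    (hgradlb : ∀ z : E, δ ≤ ‖gradient I z‖)
    (hgradub : ∀ z : E, ‖gradient I z‖ ≤ L)
    (hHess : ∀ z : E, ‖fderiv ℝ (fun w => gradient I w) z‖ ≤ M)
    (a b : E) (lam : ℝ)
    (hproj : I (a + lam • gradient I a) = I b)
    (hsmall : |lam| ≤ δ ^ 2 / (M * L ^ 2)) :
    lam ^ 2 ≤ (4 * L ^ 2 / δ ^ 4) * ‖a - b‖ ^ 2 := by
  have hq := quad_bound I hI M hM.le hHess a (lam • gradient I a)
  set G := ‖gradient I a‖ with hGdef
  have hG1 : δ ≤ G := hgradlb a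
  have hG2 : G ≤ L := hgradub a
  have hinner : ⟪gradient I a, lam • gradient I a⟫ = lam * G ^ 2 := by
    rw [real_inner_smul_right, real_inner_self_eq_norm_sq]
  have hnv : ‖lam • gradient I a‖ ^ 2 = lam ^ 2 * G ^ 2 := by
    rw [norm_smul, mul_pow, Real.norm_eq_abs, sq_abs]
  rw [hproj, hinner, hnv] at hq
  -- Lipschitz bound on I
  have hLip : |I b - I a| ≤ L * ‖a - b‖ := by
    have hgradnorm : ∀ z : E, ‖fderiv ℝ I z‖ ≤ L := by
      intro z
      have : ‖gradient I z‖ = ‖fderiv ℝ I z‖ := by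
        simp [gradient]
      rw [← this]; exact hgradub z
    have := Convex.norm_image_sub_le_of_norm_fderiv_le
      (fun z _ => (hI.differentiable (by norm_num) z)) (fun z _ => hgradnorm z)
      convex_univ (Set.mem_univ a) (Set.mem_univ b)
    calc |I b - I a| ≤ L * ‖b - a‖ := this
      _ = L * ‖a - b‖ := by rw [norm_sub_rev]
  -- combine
  have hml : |lam| * (M * L ^ 2) ≤ δ ^ 2 := by
    rw [← le_div_iff₀ (by positivity)]; exact hsmall
  have hsq : lam ^ 2 = |lam| * |lam| := by rw [← sq_abs]; ring
  have habs : 0 ≤ |lam| := abs_nonneg lam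
  have hGnn : (0:ℝ) ≤ G := (norm_nonneg _)
  have key : |lam| * δ ^ 2 ≤ 2 * (L * ‖a - b‖) := by
    have h1 : |lam| * G ^ 2 ≤ |I b - I a| + M / 2 * (lam ^ 2 * G ^ 2) := by
      have h2 : |lam| * G ^ 2 = |lam * G ^ 2| := by
        rw [abs_mul, abs_of_nonneg (by positivity : (0:ℝ) ≤ G ^ 2)]
      have h3 : lam * G ^ 2 = (I b - I a) - (I b - I a - lam * G ^ 2) := by ring
      calc |lam| * G ^ 2 = |(I b - I a) - (I b - I a - lam * G ^ 2)| := by rw [h2, ← h3]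
        _ ≤ |I b - I a| + |I b - I a - lam * G ^ 2| := abs_sub _ _
        _ ≤ |I b - I a| + M / 2 * (lam ^ 2 * G ^ 2) := by linarith [hq]
    have t1 : |lam| * δ ^ 2 ≤ |lam| * G ^ 2 :=
      mul_le_mul_of_nonneg_left (by nlinarith) habs
    have t2 : M / 2 * (lam ^ 2 * G ^ 2) ≤ M / 2 * (lam ^ 2 * L ^ 2) := by
      have : G ^ 2 ≤ L ^ 2 := by nlinarith
      have := mul_le_mul_of_nonneg_left this (sq_nonneg lam)
      nlinarith [hM.le]
    have t3 : |lam| * (|lam| * (M * L ^ 2)) ≤ |lam| * δ ^ 2 :=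
      mul_le_mul_of_nonneg_left hml habs
    have heq : M / 2 * (lam ^ 2 * L ^ 2) = (1 / 2) * (|lam| * (|lam| * (M * L ^ 2))) := by
      rw [hsq]; ring
    linarith [h1, hLip, t1, t2, t3]
  have hsqd : (|lam| * δ ^ 2) * (|lam| * δ ^ 2) ≤ (2 * (L * ‖a - b‖)) * (2 * (L * ‖a - b‖)) :=
    mul_self_le_mul_self (by positivity) key
  have h4 : (|lam| * δ ^ 2) * (|lam| * δ ^ 2) = lam ^ 2 * δ ^ 4 := by rw [hsq]; ring
  have h5 : (2 * (L * ‖a - b‖)) * (2 * (L * ‖a - b‖)) = 4 * L ^ 2 * ‖a - b‖ ^ 2 := by ring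
  rw [div_mul_eq_mul_div, le_div_iff₀ (by positivity : (0:ℝ) < δ ^ 4)]
  linarith [hsqd]

end Aux2
/-- Mean-square bound on the projection parameter:
`E[λ²] ≤ (4L²/δ⁴)·E[|X̂ − X|²]`, where `λ` realizes the projection onto the level set
`{z : I(z) = I(x)}` in the direction `∇I(X̂)`. -/
theorem lambda_mean_square_bound {Ω : Type*} [MeasureSpace Ω]
    [IsProbabilityMeasure (ℙ : Measure Ω)]
    (d : ℕ) (x : EuclideanSpace ℝ (Fin d))
    (X Xhat : Ω → EuclideanSpace ℝ (Fin d))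
    (hX : MemLp X 2 ℙ) (hXhat : MemLp Xhat 2 ℙ)
    (I : EuclideanSpace ℝ (Fin d) → ℝ) (hI : ContDiff ℝ 2 I)
    (δ L M : ℝ) (hδ : 0 < δ) (hL : 0 < L) (hM : 0 < M)
    (hgradlb : ∀ z : EuclideanSpace ℝ (Fin d), δ ≤ ‖gradient I z‖)
    (hgradub : ∀ z : EuclideanSpace ℝ (Fin d), ‖gradient I z‖ ≤ L)
    (hHess : ∀ z : EuclideanSpace ℝ (Fin d), ‖fderiv ℝ (fun w => gradient I w) z‖ ≤ M)
    (hlevel : ∀ᵐ ω ∂(ℙ : Measure Ω), I (X ω) = I x)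
    (lam : Ω → ℝ) (hlam : Measurable lam)
    (hproj : ∀ᵐ ω ∂(ℙ : Measure Ω), I (Xhat ω + lam ω • gradient I (Xhat ω)) = I x)
    (hsmall : ∀ᵐ ω ∂(ℙ : Measure Ω), |lam ω| ≤ δ ^ 2 / (M * L ^ 2)) :
    ∫ ω, (lam ω) ^ 2 ∂(ℙ : Measure Ω) ≤ (4 * L ^ 2 / δ ^ 4) * ∫ ω, ‖Xhat ω - X ω‖ ^ 2 ∂(ℙ : Measure Ω) := by
  have hae : ∀ᵐ ω ∂(ℙ : Measure Ω),
      (lam ω) ^ 2 ≤ (4 * L ^ 2 / δ ^ 4) * ‖Xhat ω - X ω‖ ^ 2 := by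
    filter_upwards [hlevel, hproj, hsmall] with ω h1 h2 h3
    exact pointwise_bound I hI δ L M hδ hL hM hgradlb hgradub hHess
      (Xhat ω) (X ω) (lam ω) (by rw [h2, h1]) h3
  have hInt1 : Integrable (fun ω => (lam ω) ^ 2) (ℙ : Measure Ω) := by
    refine (integrable_const ((δ ^ 2 / (M * L ^ 2)) ^ 2)).mono'
      ((hlam.pow_const 2).aestronglyMeasurable) ?_
    filter_upwards [hsmall] with ω h3
    rw [Real.norm_eq_abs, abs_pow]
    exact pow_le_pow_left₀ (abs_nonneg _) h3 2
  have hInt2 : Integrable (fun ω => ‖Xhat ω - X ω‖ ^ 2) (ℙ : Measure Ω) :=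
    ((hXhat.sub hX).norm).integrable_sq
  calc ∫ ω, (lam ω) ^ 2 ∂(ℙ : Measure Ω)
      ≤ ∫ ω, (4 * L ^ 2 / δ ^ 4) * ‖Xhat ω - X ω‖ ^ 2 ∂(ℙ : Measure Ω) :=
        integral_mono_ae hInt1 (hInt2.const_mul _) hae
    _ = (4 * L ^ 2 / δ ^ 4) * ∫ ω, ‖Xhat ω - X ω‖ ^ 2 ∂(ℙ : Measure Ω) :=
        integral_const_mul _ _
end

section
/- Let δ, L, M > 0. There exists a constant C, depending only on δ, L and M, with the following property: for every probability space (Ω, F, P), every x ∈ ℝ^d, all square-integrable random vectors X, X̂ : Ω → ℝ^d with I(X) = I(x) almost surely, every I : ℝ^d → ℝ twice continuously differentiable with δ ≤ |∇I(z)| ≤ L and ‖∇²I(z)‖ ≤ M for all z, and every random variable λ : Ω → ℝ satisfying I(X̂ + λ∇I(X̂)) = I(x) almost surely and |λ| ≤ δ²/(ML²) almost surely, one has |E[λ]| ≤ C·( |E[X̂ − X]| + E[|X̂ − X|²] + (E[|X − x|²])^{1/2}·(E[|X̂ − X|²])^{1/2} ). -/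
open MeasureTheory ProbabilityTheory
open scoped RealInnerProductSpace

open InnerProductSpace
set_option maxHeartbeats 1000000

section Aux
variable {F : Type*} [NormedAddCommGroup F] [InnerProductSpace ℝ F] [CompleteSpace F]

lemma gradient_differentiable' {I : F → ℝ} (hI : ContDiff ℝ 2 I) :
    Differentiable ℝ (fun w => gradient I w) := by
  have h1 : ContDiff ℝ 1 (fderiv ℝ I) := hI.fderiv_right (by norm_num)
  have h2 : (fun w => gradient I w) = fun w => (toDual ℝ F).symm (fderiv ℝ I w) := rfl
  rw [h2]
  exact ((toDual ℝ F).symm.contDiff.comp h1).differentiable one_ne_zero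

lemma gradient_lip {I : F → ℝ} (hI : ContDiff ℝ 2 I) {M : ℝ} (hM : 0 ≤ M)
    (hb : ∀ z, ‖fderiv ℝ (fun w => gradient I w) z‖ ≤ M) (a b : F) :
    ‖gradient I a - gradient I b‖ ≤ M * ‖a - b‖ := by
  have hlip := lipschitzWith_of_nnnorm_fderiv_le (𝕜 := ℝ) (gradient_differentiable' hI)
    (C := M.toNNReal) (fun z => by
      rw [← NNReal.coe_le_coe]
      simpa [Real.coe_toNNReal M hM] using hb z)
  have h := hlip.dist_le_mul a b
  simpa [dist_eq_norm, Real.coe_toNNReal M hM] using h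

lemma taylor_half {I : F → ℝ} (hI : ContDiff ℝ 2 I) {M : ℝ} (hM : 0 ≤ M)
    (hb : ∀ z, ‖fderiv ℝ (fun w => gradient I w) z‖ ≤ M) (a v : F) :
    |I (a + v) - I a - ⟪gradient I a, v⟫| ≤ M / 2 * ‖v‖ ^ 2 := by
  have hdI : Differentiable ℝ I := hI.differentiable two_ne_zero
  set g := fun w => gradient I w with hgdef
  have hφ : ∀ t : ℝ, HasDerivAt (fun t : ℝ => I (a + t • v)) ⟪g (a + t • v), v⟫ t := by
    intro t
    have hc : HasDerivAt (fun t : ℝ => a + t • v) v t := by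
      simpa using ((hasDerivAt_id t).smul_const v).const_add a
    have hd := (hdI (a + t • v)).hasGradientAt.hasFDerivAt.comp_hasDerivAt t hc
    exact hd
  have key : ∀ t ∈ Set.Icc (0:ℝ) 1, |⟪g (a + t • v) - g a, v⟫| ≤ M * ‖v‖ ^ 2 * t := by
    intro t ht
    have h1 : |⟪g (a + t • v) - g a, v⟫| ≤ ‖g (a + t • v) - g a‖ * ‖v‖ :=
      abs_real_inner_le_norm _ _
    have h2 : ‖g (a + t • v) - g a‖ ≤ M * ‖t • v‖ := by
      simpa using gradient_lip hI hM hb (a + t • v) a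
    have h3 : ‖t • v‖ = t * ‖v‖ := by
      rw [norm_smul, Real.norm_eq_abs, abs_of_nonneg ht.1]
    have h4 := mul_le_mul_of_nonneg_right h2 (norm_nonneg v)
    rw [h3] at h4
    calc |⟪g (a + t • v) - g a, v⟫_ℝ| ≤ ‖g (a + t • v) - g a‖ * ‖v‖ := h1
    _ ≤ M * (t * ‖v‖) * ‖v‖ := h4
    _ = M * ‖v‖ ^ 2 * t := by ring
  -- upper bound
  have upper : I (a + v) - I a - ⟪g a, v⟫ ≤ M / 2 * ‖v‖ ^ 2 := by
    have hχ : ∀ t : ℝ, HasDerivAt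
        (fun t : ℝ => I (a + t • v) - t * ⟪g a, v⟫ - M / 2 * ‖v‖ ^ 2 * t ^ 2)
        (⟪g (a + t • v) - g a, v⟫ - M * ‖v‖ ^ 2 * t) t := by
      intro t
      have h1 := ((hφ t).sub ((hasDerivAt_id t).mul_const ⟪g a, v⟫)).sub
        ((hasDerivAt_pow 2 t).const_mul (M / 2 * ‖v‖ ^ 2))
      refine h1.congr_deriv ?_
      rw [inner_sub_left]; push_cast; ring
    have hanti : AntitoneOn
        (fun t : ℝ => I (a + t • v) - t * ⟪g a, v⟫ - M / 2 * ‖v‖ ^ 2 * t ^ 2)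
        (Set.Icc 0 1) := by
      apply antitoneOn_of_deriv_nonpos (convex_Icc 0 1)
      · exact Continuous.continuousOn (by
          have : Differentiable ℝ (fun t : ℝ => I (a + t • v) - t * ⟪g a, v⟫ -
              M / 2 * ‖v‖ ^ 2 * t ^ 2) := fun t => (hχ t).differentiableAt
          exact this.continuous)
      · intro t ht
        exact (hχ t).differentiableAt.differentiableWithinAt
      · intro t ht
        rw [(hχ t).deriv]
        rw [interior_Icc] at ht
        have h4 := key t ⟨ht.1.le, ht.2.le⟩
        have h5 : ⟪g (a + t • v) - g a, v⟫ ≤ M * ‖v‖ ^ 2 * t := le_trans (le_abs_self _) h4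
        linarith
    have h01 := hanti (Set.left_mem_Icc.2 zero_le_one)
      (Set.right_mem_Icc.2 zero_le_one) zero_le_one
    simp only [zero_smul, add_zero, one_smul, zero_mul, one_mul, zero_pow, one_pow,
      mul_zero, sub_zero, mul_one] at h01
    linarith
  -- lower bound
  have lower : -(M / 2 * ‖v‖ ^ 2) ≤ I (a + v) - I a - ⟪g a, v⟫ := by
    have hχ : ∀ t : ℝ, HasDerivAt
        (fun t : ℝ => I (a + t • v) - t * ⟪g a, v⟫ + M / 2 * ‖v‖ ^ 2 * t ^ 2)
        (⟪g (a + t • v) - g a, v⟫ + M * ‖v‖ ^ 2 * t) t := by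
      intro t
      have h1 := ((hφ t).sub ((hasDerivAt_id t).mul_const ⟪g a, v⟫)).add
        ((hasDerivAt_pow 2 t).const_mul (M / 2 * ‖v‖ ^ 2))
      refine h1.congr_deriv ?_
      rw [inner_sub_left]; push_cast; ring
    have hmono : MonotoneOn
        (fun t : ℝ => I (a + t • v) - t * ⟪g a, v⟫ + M / 2 * ‖v‖ ^ 2 * t ^ 2)
        (Set.Icc 0 1) := by
      apply monotoneOn_of_deriv_nonneg (convex_Icc 0 1)
      · exact Continuous.continuousOn (by
          have : Differentiable ℝ (fun t : ℝ => I (a + t • v) - t * ⟪g a, v⟫ +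
              M / 2 * ‖v‖ ^ 2 * t ^ 2) := fun t => (hχ t).differentiableAt
          exact this.continuous)
      · intro t ht
        exact (hχ t).differentiableAt.differentiableWithinAt
      · intro t ht
        rw [(hχ t).deriv]
        rw [interior_Icc] at ht
        have h4 := key t ⟨ht.1.le, ht.2.le⟩
        have h5 : -(M * ‖v‖ ^ 2 * t) ≤ ⟪g (a + t • v) - g a, v⟫ := neg_le_of_abs_le h4
        linarith
    have h01 := hmono (Set.left_mem_Icc.2 zero_le_one)
      (Set.right_mem_Icc.2 zero_le_one) zero_le_one
    simp only [zero_smul, add_zero, one_smul, zero_mul, one_mul, zero_pow, one_pow,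
      mul_zero, sub_zero, mul_one] at h01
    linarith
  rw [abs_le]
  exact ⟨by linarith, upper⟩

end Aux

section Aux2
variable {Ω : Type*} [MeasureSpace Ω] {μ : Measure Ω}

lemma mul_integrable_of_L2 {f g : Ω → ℝ} (hf : MemLp f 2 μ) (hg : MemLp g 2 μ) :
    Integrable (fun ω => f ω * g ω) μ := by
  have h1 := hf.integrable_sq
  have h2 := hg.integrable_sq
  refine Integrable.mono' ((h1.add h2).const_mul (1/2)) (hf.1.mul hg.1) ?_
  filter_upwards with ω
  rw [Real.norm_eq_abs]
  have := two_mul_le_add_sq (f ω) (g ω)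
  have := two_mul_le_add_sq (f ω) (-g ω)
  simp only [Pi.add_apply]
  rw [abs_le]
  constructor <;> nlinarith

lemma cauchy_schwarz_L2 {E : Type*} [NormedAddCommGroup E] {f g : Ω → E}
    (hf : MemLp f 2 μ) (hg : MemLp g 2 μ) :
    ∫ ω, ‖f ω‖ * ‖g ω‖ ∂μ ≤
      Real.sqrt (∫ ω, ‖f ω‖ ^ 2 ∂μ) * Real.sqrt (∫ ω, ‖g ω‖ ^ 2 ∂μ) := by
  have hpq : Real.HolderConjugate 2 2 := Real.HolderConjugate.two_two
  have h2 : ENNReal.ofReal (2:ℝ) = 2 := by norm_num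
  have := integral_mul_norm_le_Lp_mul_Lq (μ := μ) hpq (h2 ▸ hf) (h2 ▸ hg)
  have e1 : ∀ (h : Ω → E), (∫ ω, ‖h ω‖ ^ (2:ℝ) ∂μ) = ∫ ω, ‖h ω‖ ^ (2:ℕ) ∂μ := by
    intro h; refine integral_congr_ae ?_; filter_upwards with ω
    rw [← Real.rpow_natCast ‖h ω‖ 2]; norm_num
  rw [e1, e1] at this
  have e2 : ∀ (y : ℝ), 0 ≤ y → y ^ (1/2 : ℝ) = Real.sqrt y := by
    intro y hy; rw [Real.sqrt_eq_rpow]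
  rw [e2 _ (integral_nonneg fun ω => by positivity),
    e2 _ (integral_nonneg fun ω => by positivity)] at this
  exact this

end Aux2

section Aux3
variable {F : Type*} [NormedAddCommGroup F] [InnerProductSpace ℝ F] [CompleteSpace F]

noncomputable def Kproj (δ L M : ℝ) : ℝ :=
  (M/2*((2*L+M)^2/δ^4 + (2*L+M)/(M*L^2)) + M/(2*δ^2)) + 3*L^2*M/δ^4

lemma pointwise_est (δ L M : ℝ) (hδ : 0 < δ) (hL : 0 < L) (hM : 0 < M)
    {I : F → ℝ} (hI : ContDiff ℝ 2 I)
    (hglow : ∀ z, δ ≤ ‖gradient I z‖) (hgup : ∀ z, ‖gradient I z‖ ≤ L)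
    (hghess : ∀ z, ‖fderiv ℝ (fun w => gradient I w) z‖ ≤ M)
    (x a w : F) (lam : ℝ)
    (hIw : I w = I x) (hproj : I (a + lam • gradient I a) = I x)
    (hlb : |lam| ≤ δ^2/(M*L^2)) :
    |lam - ⟪gradient I x, w - a⟫ / ‖gradient I x‖^2| ≤
      Kproj δ L M * ‖a - w‖^2 + (3*L^2*M/δ^4) * (‖w - x‖ * ‖a - w‖) := by
  set u := gradient I a with hu
  set u₀ := gradient I x with hu₀
  set h : F := w - a with hh
  have hδL : δ ≤ L := le_trans (hglow x) (hgup x)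
  have hun : δ ≤ ‖u‖ := hglow a
  have hunL : ‖u‖ ≤ L := hgup a
  have hu2 : δ^2 ≤ ‖u‖^2 := by nlinarith [norm_nonneg u]
  have hu2L : ‖u‖^2 ≤ L^2 := by nlinarith [norm_nonneg u]
  have hu02 : δ^2 ≤ ‖u₀‖^2 := by nlinarith [hglow x, norm_nonneg u₀]
  have hu02L : ‖u₀‖^2 ≤ L^2 := by nlinarith [hgup x, hglow x]
  have hδ2 : (0:ℝ) < δ^2 := by positivity
  have hu2pos : (0:ℝ) < ‖u‖^2 := lt_of_lt_of_le hδ2 hu2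
  have hu02pos : (0:ℝ) < ‖u₀‖^2 := lt_of_lt_of_le hδ2 hu02
  -- Taylor at a in direction lam • u
  have T1 : |I (a + lam • u) - I a - lam * ‖u‖^2| ≤ M/2 * lam^2 * ‖u‖^2 := by
    have := taylor_half hI hM.le hghess a (lam • u)
    have e1 : ⟪u, lam • u⟫ = lam * ‖u‖^2 := by
      rw [real_inner_smul_right, real_inner_self_eq_norm_sq]
    have e2 : ‖lam • u‖^2 = lam^2 * ‖u‖^2 := by
      rw [norm_smul, Real.norm_eq_abs, mul_pow, sq_abs]
    rw [e1, e2] at this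
    calc |I (a + lam • u) - I a - lam * ‖u‖^2| ≤ M/2 * (lam^2 * ‖u‖^2) := this
    _ = M/2 * lam^2 * ‖u‖^2 := by ring
  have T2 : |I w - I a - ⟪u, h⟫| ≤ M/2 * ‖h‖^2 := by
    have := taylor_half hI hM.le hghess a h
    rwa [show a + h = w by rw [hh]; abel] at this
  -- key estimate (*)
  have star : |lam * ‖u‖^2 - ⟪u, h⟫| ≤ M/2 * lam^2 * ‖u‖^2 + M/2 * ‖h‖^2 := by
    rw [abs_le] at T1 T2 ⊢
    rw [hproj, ← hIw] at T1
    constructor <;> [linarith [T1.1, T2.2]; linarith [T1.2, T2.1]]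
  have hinner : |⟪u, h⟫| ≤ L * ‖h‖ := by
    calc |⟪u, h⟫| ≤ ‖u‖ * ‖h‖ := abs_real_inner_le_norm _ _
    _ ≤ L * ‖h‖ := mul_le_mul_of_nonneg_right hunL (norm_nonneg _)
  -- absorb the quadratic term in lam
  have Mhalf : M/2 * lam^2 * ‖u‖^2 ≤ |lam| * δ^2 / 2 := by
    have e1 : lam^2 = |lam| * |lam| := by rw [← sq_abs]; ring
    have e2 : |lam| * ‖u‖^2 ≤ (δ^2/(M*L^2)) * L^2 :=
      mul_le_mul hlb hu2L (sq_nonneg _) (by positivity)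
    have e3 : M/2 * (|lam| * (|lam| * ‖u‖^2)) ≤ M/2 * (|lam| * ((δ^2/(M*L^2)) * L^2)) := by
      have := mul_le_mul_of_nonneg_left e2 (abs_nonneg lam)
      nlinarith [hM.le]
    have e4 : M/2 * (|lam| * ((δ^2/(M*L^2)) * L^2)) = |lam| * δ^2 / 2 := by
      field_simp
    calc M/2 * lam^2 * ‖u‖^2 = M/2 * (|lam| * (|lam| * ‖u‖^2)) := by rw [e1]; ring
    _ ≤ |lam| * δ^2 / 2 := by rw [← e4]; exact e3
  have hlam1 : |lam| * δ^2 ≤ 2*L*‖h‖ + M*‖h‖^2 := by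
    have t1 : |lam| * ‖u‖^2 = |lam * ‖u‖^2| := by
      rw [abs_mul, abs_of_pos hu2pos]
    have t2 : |lam * ‖u‖^2| ≤ |lam * ‖u‖^2 - ⟪u,h⟫| + |⟪u,h⟫| := by
      calc |lam * ‖u‖^2| = |(lam * ‖u‖^2 - ⟪u,h⟫) + ⟪u,h⟫| := by ring_nf
      _ ≤ _ := abs_add_le _ _
    have t3 : |lam| * δ^2 ≤ |lam| * ‖u‖^2 :=
      mul_le_mul_of_nonneg_left hu2 (abs_nonneg lam)
    linarith
  -- lam^2 ≤ K0 * ‖h‖^2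
  have hK0 : lam^2 ≤ ((2*L+M)^2/δ^4 + (2*L+M)/(M*L^2)) * ‖h‖^2 := by
    have hterm2 : (0:ℝ) ≤ (2*L+M)/(M*L^2) * ‖h‖^2 := by positivity
    have hterm1 : (0:ℝ) ≤ (2*L+M)^2/δ^4 * ‖h‖^2 := by positivity
    rcases le_or_gt ‖h‖ 1 with hc | hc
    · have hsq : ‖h‖^2 ≤ ‖h‖ := by nlinarith [norm_nonneg h]
      have hb1 : |lam| * δ^2 ≤ (2*L+M) * ‖h‖ := by
        nlinarith [mul_nonneg hM.le (sub_nonneg.2 hsq)]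
      have hb2 : (|lam| * δ^2)^2 ≤ ((2*L+M) * ‖h‖)^2 :=
        pow_le_pow_left₀ (by positivity) hb1 2
      rw [mul_pow, sq_abs] at hb2
      rw [mul_pow] at hb2
      have hb4 : lam^2 ≤ (2*L+M)^2 * ‖h‖^2 / (δ^2)^2 :=
        (le_div_iff₀ (by positivity)).2 hb2
      have e : (2*L+M)^2 * ‖h‖^2 / (δ^2)^2 = (2*L+M)^2/δ^4 * ‖h‖^2 := by ring
      rw [e] at hb4
      linarith
    · have hhh : ‖h‖ ≤ ‖h‖^2 := by nlinarith
      have hb1 : |lam| ≤ (2*L+M) * ‖h‖^2 / δ^2 := by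
        rw [le_div_iff₀ hδ2]
        nlinarith [mul_nonneg (by positivity : (0:ℝ) ≤ 2*L) (sub_nonneg.2 hhh)]
      have hb2 : lam^2 ≤ (δ^2/(M*L^2)) * ((2*L+M) * ‖h‖^2 / δ^2) := by
        rw [← sq_abs, sq]
        exact mul_le_mul hlb hb1 (abs_nonneg _) (by positivity)
      have e : (δ^2/(M*L^2)) * ((2*L+M) * ‖h‖^2 / δ^2) = (2*L+M)/(M*L^2) * ‖h‖^2 := by
        field_simp
      rw [e] at hb2
      linarith
  -- step 3
  have step3 : |lam - ⟪u, h⟫ / ‖u‖^2| ≤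
      (M/2*((2*L+M)^2/δ^4 + (2*L+M)/(M*L^2)) + M/(2*δ^2)) * ‖h‖^2 := by
    have e : lam - ⟪u, h⟫ / ‖u‖^2 = (lam * ‖u‖^2 - ⟪u, h⟫) / ‖u‖^2 := by
      rw [sub_div, mul_div_cancel_right₀ _ hu2pos.ne']
    rw [e, abs_div, abs_of_pos hu2pos]
    have d1 : |lam * ‖u‖^2 - ⟪u,h⟫| / ‖u‖^2 ≤ (M/2 * lam^2 * ‖u‖^2 + M/2 * ‖h‖^2) / ‖u‖^2 := by
      gcongr
    have d2 : (M/2 * lam^2 * ‖u‖^2 + M/2 * ‖h‖^2) / ‖u‖^2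
        = M/2 * lam^2 + (M/2 * ‖h‖^2) / ‖u‖^2 := by
      rw [add_div, mul_div_cancel_right₀ _ hu2pos.ne']
    have d3 : (M/2 * ‖h‖^2) / ‖u‖^2 ≤ (M/2 * ‖h‖^2) / δ^2 := by gcongr <;> positivity
    have d4 : M/2 * lam^2 ≤ M/2 * (((2*L+M)^2/δ^4 + (2*L+M)/(M*L^2)) * ‖h‖^2) := by
      have := mul_le_mul_of_nonneg_left hK0 (by positivity : (0:ℝ) ≤ M/2)
      linarith
    have d5 : (M/2 * ‖h‖^2) / δ^2 = M/(2*δ^2) * ‖h‖^2 := by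
      field_simp
      try ring
    calc |lam * ‖u‖^2 - ⟪u,h⟫| / ‖u‖^2 ≤ M/2 * lam^2 + (M/2 * ‖h‖^2) / ‖u‖^2 := by
          rw [← d2]; exact d1
    _ ≤ M/2 * (((2*L+M)^2/δ^4 + (2*L+M)/(M*L^2)) * ‖h‖^2) + M/(2*δ^2) * ‖h‖^2 := by
          rw [← d5]; exact add_le_add d4 d3
    _ = (M/2*((2*L+M)^2/δ^4 + (2*L+M)/(M*L^2)) + M/(2*δ^2)) * ‖h‖^2 := by ring
  -- step 4
  have hlipax : ‖u - u₀‖ ≤ M * ‖a - x‖ := gradient_lip hI hM.le hghess a x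
  have step4 : |⟪u, h⟫ / ‖u‖^2 - ⟪u₀, h⟫ / ‖u₀‖^2| ≤ (3*L^2*M/δ^4) * (‖a - x‖ * ‖h‖) := by
    have heq : ⟪u, h⟫ / ‖u‖^2 - ⟪u₀, h⟫ / ‖u₀‖^2
        = (⟪u, h⟫ * ‖u₀‖^2 - ⟪u₀, h⟫ * ‖u‖^2) / (‖u‖^2 * ‖u₀‖^2) := by
      rw [div_sub_div _ _ hu2pos.ne' hu02pos.ne']; ring
    have hnum : |⟪u, h⟫ * ‖u₀‖^2 - ⟪u₀, h⟫ * ‖u‖^2| ≤ 3*L^2 * (M * ‖a - x‖) * ‖h‖ := by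
      have e : ⟪u, h⟫ * ‖u₀‖^2 - ⟪u₀, h⟫ * ‖u‖^2
          = ⟪u - u₀, h⟫ * ‖u₀‖^2 + ⟪u₀, h⟫ * (‖u₀‖^2 - ‖u‖^2) := by
        rw [inner_sub_left]; ring
      have b1 : |⟪u - u₀, h⟫| ≤ (M * ‖a - x‖) * ‖h‖ := by
        calc |⟪u - u₀, h⟫| ≤ ‖u - u₀‖ * ‖h‖ := abs_real_inner_le_norm _ _
        _ ≤ (M * ‖a - x‖) * ‖h‖ := mul_le_mul_of_nonneg_right hlipax (norm_nonneg _)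
      have b2 : |‖u₀‖^2 - ‖u‖^2| ≤ 2*L * (M * ‖a - x‖) := by
        have e2 : ‖u₀‖^2 - ‖u‖^2 = (‖u₀‖ - ‖u‖) * (‖u₀‖ + ‖u‖) := by ring
        rw [e2, abs_mul]
        have c1 : |‖u₀‖ - ‖u‖| ≤ M * ‖a - x‖ := by
          calc |‖u₀‖ - ‖u‖| ≤ ‖u₀ - u‖ := abs_norm_sub_norm_le _ _
          _ = ‖u - u₀‖ := norm_sub_rev _ _
          _ ≤ M * ‖a - x‖ := hlipax
        have c2 : |‖u₀‖ + ‖u‖| ≤ 2*L := by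
          rw [abs_of_nonneg (by positivity)]
          linarith [hgup x, hunL]
        calc |‖u₀‖ - ‖u‖| * |‖u₀‖ + ‖u‖| ≤ (M * ‖a - x‖) * (2*L) :=
              mul_le_mul c1 c2 (abs_nonneg _) (by positivity)
        _ = 2*L * (M * ‖a - x‖) := by ring
      have b3 : |⟪u₀, h⟫| ≤ L * ‖h‖ := by
        calc |⟪u₀, h⟫| ≤ ‖u₀‖ * ‖h‖ := abs_real_inner_le_norm _ _
        _ ≤ L * ‖h‖ := mul_le_mul_of_nonneg_right (hgup x) (norm_nonneg _)
      rw [e]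
      calc |⟪u - u₀, h⟫ * ‖u₀‖^2 + ⟪u₀, h⟫ * (‖u₀‖^2 - ‖u‖^2)|
          ≤ |⟪u - u₀, h⟫| * ‖u₀‖^2 + |⟪u₀, h⟫| * |‖u₀‖^2 - ‖u‖^2| := by
            refine le_trans (abs_add_le _ _) ?_
            rw [abs_mul, abs_mul, abs_of_pos hu02pos]
      _ ≤ ((M * ‖a - x‖) * ‖h‖) * L^2 + (L * ‖h‖) * (2*L * (M * ‖a - x‖)) := by
            refine add_le_add (mul_le_mul b1 hu02L (sq_nonneg _) (by positivity)) ?_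
            exact mul_le_mul b3 b2 (abs_nonneg _) (by positivity)
      _ = 3*L^2 * (M * ‖a - x‖) * ‖h‖ := by ring
    rw [heq, abs_div, abs_of_pos (by positivity : (0:ℝ) < ‖u‖^2 * ‖u₀‖^2)]
    have hdd : δ^2 * δ^2 ≤ ‖u‖^2 * ‖u₀‖^2 :=
      mul_le_mul hu2 hu02 hδ2.le (sq_nonneg _)
    calc |⟪u, h⟫ * ‖u₀‖^2 - ⟪u₀, h⟫ * ‖u‖^2| / (‖u‖^2 * ‖u₀‖^2)
        ≤ (3*L^2 * (M * ‖a - x‖) * ‖h‖) / (δ^2 * δ^2) :=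
          div_le_div₀ (by positivity) hnum (by positivity) hdd
    _ = (3*L^2*M/δ^4) * (‖a - x‖ * ‖h‖) := by
          field_simp
  -- combine
  have tri : |lam - ⟪u₀, h⟫ / ‖u₀‖^2| ≤
      (M/2*((2*L+M)^2/δ^4 + (2*L+M)/(M*L^2)) + M/(2*δ^2)) * ‖h‖^2
      + (3*L^2*M/δ^4) * (‖a - x‖ * ‖h‖) := by
    calc |lam - ⟪u₀, h⟫ / ‖u₀‖^2|
        ≤ |lam - ⟪u, h⟫ / ‖u‖^2| + |⟪u, h⟫ / ‖u‖^2 - ⟪u₀, h⟫ / ‖u₀‖^2| := abs_sub_le _ _ _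
    _ ≤ _ := add_le_add step3 step4
  have hax : ‖a - x‖ ≤ ‖h‖ + ‖w - x‖ := by
    calc ‖a - x‖ = ‖(a - w) + (w - x)‖ := by rw [show a - x = (a - w) + (w - x) by abel]
    _ ≤ ‖a - w‖ + ‖w - x‖ := norm_add_le _ _
    _ = ‖h‖ + ‖w - x‖ := by rw [hh, norm_sub_rev]
  have hhw : ‖h‖ = ‖a - w‖ := by rw [hh, norm_sub_rev]
  have hK2 : (0:ℝ) ≤ 3*L^2*M/δ^4 := by positivity
  have expand : (3*L^2*M/δ^4) * (‖a - x‖ * ‖h‖) ≤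
      (3*L^2*M/δ^4) * ‖h‖^2 + (3*L^2*M/δ^4) * (‖w - x‖ * ‖h‖) := by
    have : ‖a - x‖ * ‖h‖ ≤ (‖h‖ + ‖w - x‖) * ‖h‖ :=
      mul_le_mul_of_nonneg_right hax (norm_nonneg _)
    nlinarith [norm_nonneg h, norm_nonneg (w - x)]
  rw [Kproj, ← hhw]
  calc |lam - ⟪u₀, h⟫ / ‖u₀‖^2|
      ≤ (M/2*((2*L+M)^2/δ^4 + (2*L+M)/(M*L^2)) + M/(2*δ^2)) * ‖h‖^2
        + ((3*L^2*M/δ^4) * ‖h‖^2 + (3*L^2*M/δ^4) * (‖w - x‖ * ‖h‖)) := by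
        linarith
  _ = ((M/2*((2*L+M)^2/δ^4 + (2*L+M)/(M*L^2)) + M/(2*δ^2)) + 3*L^2*M/δ^4) * ‖h‖^2
        + (3*L^2*M/δ^4) * (‖w - x‖ * ‖h‖) := by ring

end Aux3

/-- There is a constant `C = C(δ, L, M)` bounding the mean projection parameter:
`|E[λ]| ≤ C(|E[X̂ − X]| + E[|X̂ − X|²] + (E[|X − x|²])^{1/2}(E[|X̂ − X|²])^{1/2})`. -/
theorem lambda_mean_bound (δ L M : ℝ) (hδ : 0 < δ) (hL : 0 < L) (hM : 0 < M) :
    ∃ C : ℝ, ∀ (Ω : Type) (_ : MeasureSpace Ω),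
      IsProbabilityMeasure (ℙ : Measure Ω) →
      ∀ (d : ℕ) (x : EuclideanSpace ℝ (Fin d))
        (X Xhat : Ω → EuclideanSpace ℝ (Fin d)),
        MemLp X 2 ℙ → MemLp Xhat 2 ℙ →
        ∀ I : EuclideanSpace ℝ (Fin d) → ℝ, ContDiff ℝ 2 I →
        (∀ z : EuclideanSpace ℝ (Fin d), δ ≤ ‖gradient I z‖) →
        (∀ z : EuclideanSpace ℝ (Fin d), ‖gradient I z‖ ≤ L) →
        (∀ z : EuclideanSpace ℝ (Fin d), ‖fderiv ℝ (fun w => gradient I w) z‖ ≤ M) →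
        (∀ᵐ ω ∂(ℙ : Measure Ω), I (X ω) = I x) →
        ∀ lam : Ω → ℝ, Measurable lam →
        (∀ᵐ ω ∂(ℙ : Measure Ω), I (Xhat ω + lam ω • gradient I (Xhat ω)) = I x) →
        (∀ᵐ ω ∂(ℙ : Measure Ω), |lam ω| ≤ δ ^ 2 / (M * L ^ 2)) →
        |∫ ω, lam ω ∂(ℙ : Measure Ω)| ≤
          C * (‖∫ ω, (Xhat ω - X ω) ∂(ℙ : Measure Ω)‖ + ∫ ω, ‖Xhat ω - X ω‖ ^ 2 ∂(ℙ : Measure Ω) +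
            Real.sqrt (∫ ω, ‖X ω - x‖ ^ 2 ∂(ℙ : Measure Ω)) *
              Real.sqrt (∫ ω, ‖Xhat ω - X ω‖ ^ 2 ∂(ℙ : Measure Ω))) := by
  refine ⟨L/δ^2 + Kproj δ L M, ?_⟩
  intro Ω mΩ hprob d x X Xhat hX hXhat I hI hglow hgup hghess hXx lam hlamm hproj hlambd
  have hKp : 0 ≤ Kproj δ L M := by rw [Kproj]; positivity
  have hLδ : (0:ℝ) ≤ L/δ^2 := by positivity
  have hK2 : (0:ℝ) ≤ 3*L^2*M/δ^4 := by positivity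
  set u₀ := gradient I x with hu₀
  have hu0δ : δ ≤ ‖u₀‖ := hglow x
  have hu0L : ‖u₀‖ ≤ L := hgup x
  have hu02pos : (0:ℝ) < ‖u₀‖^2 := by nlinarith
  have hu02δ : δ^2 ≤ ‖u₀‖^2 := by nlinarith
  -- integrability
  have hXint : Integrable X ℙ := hX.integrable one_le_two
  have hXhatint : Integrable Xhat ℙ := hXhat.integrable one_le_two
  have hhint : Integrable (fun ω => X ω - Xhat ω) ℙ := hXint.sub hXhatint
  have hlamint : Integrable lam ℙ := by
    refine Integrable.mono' (integrable_const (δ^2/(M*L^2))) hlamm.aestronglyMeasurable ?_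
    filter_upwards [hlambd] with ω hω
    simpa [Real.norm_eq_abs] using hω
  have hinner_int : Integrable (fun ω => ⟪u₀, X ω - Xhat ω⟫) ℙ := hhint.const_inner u₀
  have hφint : Integrable (fun ω => ⟪u₀, X ω - Xhat ω⟫ / ‖u₀‖^2) ℙ := hinner_int.div_const _
  have hrint : Integrable (fun ω => lam ω - ⟪u₀, X ω - Xhat ω⟫ / ‖u₀‖^2) ℙ :=
    hlamint.sub hφint
  have hdiff2 : MemLp (fun ω => Xhat ω - X ω) 2 ℙ := hXhat.sub hX
  have hXx2 : MemLp (fun ω => X ω - x) 2 ℙ := hX.sub (memLp_const x)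
  have hsqint : Integrable (fun ω => ‖Xhat ω - X ω‖^2) ℙ := hdiff2.norm.integrable_sq
  have hprodint : Integrable (fun ω => ‖X ω - x‖ * ‖Xhat ω - X ω‖) ℙ :=
    mul_integrable_of_L2 hXx2.norm hdiff2.norm
  -- pointwise bound
  have pw : ∀ᵐ ω ∂(ℙ : Measure Ω), |lam ω - ⟪u₀, X ω - Xhat ω⟫ / ‖u₀‖^2| ≤
      Kproj δ L M * ‖Xhat ω - X ω‖^2 + (3*L^2*M/δ^4) * (‖X ω - x‖ * ‖Xhat ω - X ω‖) := by
    filter_upwards [hXx, hproj, hlambd] with ω h1 h2 h3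
    exact pointwise_est δ L M hδ hL hM hI hglow hgup hghess x (Xhat ω) (X ω) (lam ω) h1 h2 h3
  -- split the integral
  have hsplit : ∫ ω, lam ω ∂(ℙ : Measure Ω) =
      (∫ ω, (lam ω - ⟪u₀, X ω - Xhat ω⟫ / ‖u₀‖^2) ∂(ℙ : Measure Ω)) +
        ∫ ω, ⟪u₀, X ω - Xhat ω⟫ / ‖u₀‖^2 ∂(ℙ : Measure Ω) := by
    rw [← integral_add hrint hφint]
    simp
  -- bound on the remainder integral
  have hbound1 : |∫ ω, (lam ω - ⟪u₀, X ω - Xhat ω⟫ / ‖u₀‖^2) ∂(ℙ : Measure Ω)| ≤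
      Kproj δ L M * (∫ ω, ‖Xhat ω - X ω‖^2 ∂(ℙ : Measure Ω)) +
        (3*L^2*M/δ^4) * ∫ ω, ‖X ω - x‖ * ‖Xhat ω - X ω‖ ∂(ℙ : Measure Ω) := by
    have h1 : |∫ ω, (lam ω - ⟪u₀, X ω - Xhat ω⟫ / ‖u₀‖^2) ∂(ℙ : Measure Ω)| ≤
        ∫ ω, |lam ω - ⟪u₀, X ω - Xhat ω⟫ / ‖u₀‖^2| ∂(ℙ : Measure Ω) := by
      simpa [Real.norm_eq_abs] using
        norm_integral_le_integral_norm (μ := (ℙ : Measure Ω))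
          (fun ω => lam ω - ⟪u₀, X ω - Xhat ω⟫ / ‖u₀‖^2)
    have h2 : ∫ ω, |lam ω - ⟪u₀, X ω - Xhat ω⟫ / ‖u₀‖^2| ∂(ℙ : Measure Ω) ≤
        ∫ ω, (Kproj δ L M * ‖Xhat ω - X ω‖^2
          + (3*L^2*M/δ^4) * (‖X ω - x‖ * ‖Xhat ω - X ω‖)) ∂(ℙ : Measure Ω) :=
      integral_mono_ae hrint.abs
        ((hsqint.const_mul _).add (hprodint.const_mul _)) pw
    have h3 : ∫ ω, (Kproj δ L M * ‖Xhat ω - X ω‖^2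
          + (3*L^2*M/δ^4) * (‖X ω - x‖ * ‖Xhat ω - X ω‖)) ∂(ℙ : Measure Ω)
        = Kproj δ L M * (∫ ω, ‖Xhat ω - X ω‖^2 ∂(ℙ : Measure Ω)) +
          (3*L^2*M/δ^4) * ∫ ω, ‖X ω - x‖ * ‖Xhat ω - X ω‖ ∂(ℙ : Measure Ω) := by
      rw [integral_add (hsqint.const_mul _) (hprodint.const_mul _),
        integral_const_mul, integral_const_mul]
    linarith
  -- bound on the linear term
  have hφeq : ∫ ω, ⟪u₀, X ω - Xhat ω⟫ / ‖u₀‖^2 ∂(ℙ : Measure Ω) =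
      ⟪u₀, ∫ ω, (X ω - Xhat ω) ∂(ℙ : Measure Ω)⟫ / ‖u₀‖^2 := by
    rw [integral_div, integral_inner hhint]
  have hXXhat : ‖∫ ω, (X ω - Xhat ω) ∂(ℙ : Measure Ω)‖
      = ‖∫ ω, (Xhat ω - X ω) ∂(ℙ : Measure Ω)‖ := by
    rw [show (fun ω => X ω - Xhat ω) = fun ω => -(Xhat ω - X ω) by funext ω; simp,
      integral_neg, norm_neg]
  have hbound2 : |∫ ω, ⟪u₀, X ω - Xhat ω⟫ / ‖u₀‖^2 ∂(ℙ : Measure Ω)| ≤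
      L/δ^2 * ‖∫ ω, (Xhat ω - X ω) ∂(ℙ : Measure Ω)‖ := by
    rw [hφeq, abs_div, abs_of_pos hu02pos]
    have h1 : |⟪u₀, ∫ ω, (X ω - Xhat ω) ∂(ℙ : Measure Ω)⟫| ≤
        L * ‖∫ ω, (Xhat ω - X ω) ∂(ℙ : Measure Ω)‖ := by
      calc |⟪u₀, ∫ ω, (X ω - Xhat ω) ∂(ℙ : Measure Ω)⟫|
          ≤ ‖u₀‖ * ‖∫ ω, (X ω - Xhat ω) ∂(ℙ : Measure Ω)‖ := abs_real_inner_le_norm _ _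
      _ ≤ L * ‖∫ ω, (X ω - Xhat ω) ∂(ℙ : Measure Ω)‖ :=
          mul_le_mul_of_nonneg_right hu0L (norm_nonneg _)
      _ = L * ‖∫ ω, (Xhat ω - X ω) ∂(ℙ : Measure Ω)‖ := by rw [hXXhat]
    calc |⟪u₀, ∫ ω, (X ω - Xhat ω) ∂(ℙ : Measure Ω)⟫| / ‖u₀‖^2
        ≤ (L * ‖∫ ω, (Xhat ω - X ω) ∂(ℙ : Measure Ω)‖) / δ^2 :=
          div_le_div₀ (by positivity) h1 (by positivity) hu02δ
    _ = L/δ^2 * ‖∫ ω, (Xhat ω - X ω) ∂(ℙ : Measure Ω)‖ := by ring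
  -- Cauchy-Schwarz
  have hCS : ∫ ω, ‖X ω - x‖ * ‖Xhat ω - X ω‖ ∂(ℙ : Measure Ω) ≤
      Real.sqrt (∫ ω, ‖X ω - x‖ ^ 2 ∂(ℙ : Measure Ω)) *
        Real.sqrt (∫ ω, ‖Xhat ω - X ω‖ ^ 2 ∂(ℙ : Measure Ω)) :=
    cauchy_schwarz_L2 hXx2 hdiff2
  -- assemble
  set T1 := ‖∫ ω, (Xhat ω - X ω) ∂(ℙ : Measure Ω)‖ with hT1
  set T2 := ∫ ω, ‖Xhat ω - X ω‖ ^ 2 ∂(ℙ : Measure Ω) with hT2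
  set T3 := Real.sqrt (∫ ω, ‖X ω - x‖ ^ 2 ∂(ℙ : Measure Ω)) *
      Real.sqrt (∫ ω, ‖Xhat ω - X ω‖ ^ 2 ∂(ℙ : Measure Ω)) with hT3
  have hT1n : 0 ≤ T1 := norm_nonneg _
  have hT2n : 0 ≤ T2 := integral_nonneg fun ω => by positivity
  have hT3n : 0 ≤ T3 := mul_nonneg (Real.sqrt_nonneg _) (Real.sqrt_nonneg _)
  have habs : |∫ ω, lam ω ∂(ℙ : Measure Ω)| ≤
      L/δ^2 * T1 + Kproj δ L M * T2 + (3*L^2*M/δ^4) *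
        ∫ ω, ‖X ω - x‖ * ‖Xhat ω - X ω‖ ∂(ℙ : Measure Ω) := by
    rw [hsplit]
    calc |(∫ ω, (lam ω - ⟪u₀, X ω - Xhat ω⟫ / ‖u₀‖^2) ∂(ℙ : Measure Ω)) +
        ∫ ω, ⟪u₀, X ω - Xhat ω⟫ / ‖u₀‖^2 ∂(ℙ : Measure Ω)|
        ≤ |∫ ω, (lam ω - ⟪u₀, X ω - Xhat ω⟫ / ‖u₀‖^2) ∂(ℙ : Measure Ω)| +
          |∫ ω, ⟪u₀, X ω - Xhat ω⟫ / ‖u₀‖^2 ∂(ℙ : Measure Ω)| := abs_add_le _ _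
    _ ≤ _ := by linarith
  have hcross : (3*L^2*M/δ^4) * ∫ ω, ‖X ω - x‖ * ‖Xhat ω - X ω‖ ∂(ℙ : Measure Ω)
      ≤ (3*L^2*M/δ^4) * T3 := mul_le_mul_of_nonneg_left hCS hK2
  have hKK : 3*L^2*M/δ^4 ≤ Kproj δ L M := by
    rw [Kproj]
    have : (0:ℝ) ≤ M/2*((2*L+M)^2/δ^4 + (2*L+M)/(M*L^2)) + M/(2*δ^2) := by positivity
    linarith
  have e1 : L/δ^2 * T1 ≤ (L/δ^2 + Kproj δ L M) * T1 := by nlinarith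
  have e2 : Kproj δ L M * T2 ≤ (L/δ^2 + Kproj δ L M) * T2 := by nlinarith
  have e3 : (3*L^2*M/δ^4) * T3 ≤ (L/δ^2 + Kproj δ L M) * T3 := by nlinarith
  have final : (L/δ^2 + Kproj δ L M) * (T1 + T2 + T3) =
      (L/δ^2 + Kproj δ L M) * T1 + (L/δ^2 + Kproj δ L M) * T2 +
        (L/δ^2 + Kproj δ L M) * T3 := by ring
  linarith
end

section
/- Let (Ω, F, P) be a probability space, x ∈ ℝ^d, let X̂ : Ω → ℝ^d be a square-integrable random vector and λ : Ω → ℝ a square-integrable random variable. Let I : ℝ^d → ℝ be twice continuously differentiable with |∇I(z)| ≤ L and ‖∇²I(z)‖ ≤ M for all z ∈ ℝ^d, and define X̄ = X̂ + λ∇I(X̂). Then E[|X̄ − X̂|²] ≤ L²·E[λ²] and |E[X̄ − X̂]| ≤ L·|E[λ]| + M·(E[|X̂ − x|²])^{1/2}·(E[λ²])^{1/2}. -/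
open MeasureTheory ProbabilityTheory
open scoped RealInnerProductSpace

/-- Bounds comparing the projected approximation `X̄ = X̂ + λ∇I(X̂)` with the supporting
approximation `X̂`: `E[|X̄ − X̂|²] ≤ L²E[λ²]` and
`|E[X̄ − X̂]| ≤ L|E[λ]| + M (E[|X̂ − x|²])^{1/2} (E[λ²])^{1/2}`. -/
theorem projected_vs_supporting_bounds {Ω : Type*} [MeasureSpace Ω]
    [IsProbabilityMeasure (ℙ : Measure Ω)]
    (d : ℕ) (x : EuclideanSpace ℝ (Fin d))
    (Xhat : Ω → EuclideanSpace ℝ (Fin d)) (hXhat : MemLp Xhat 2 ℙ)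
    (lam : Ω → ℝ) (hlam : MemLp lam 2 ℙ)
    (I : EuclideanSpace ℝ (Fin d) → ℝ) (hI : ContDiff ℝ 2 I) (L M : ℝ)
    (hgrad : ∀ z : EuclideanSpace ℝ (Fin d), ‖gradient I z‖ ≤ L)
    (hHess : ∀ z : EuclideanSpace ℝ (Fin d), ‖fderiv ℝ (fun w => gradient I w) z‖ ≤ M) :
    (∫ ω, ‖(Xhat ω + lam ω • gradient I (Xhat ω)) - Xhat ω‖ ^ 2 ∂(ℙ : Measure Ω) ≤
        L ^ 2 * ∫ ω, (lam ω) ^ 2 ∂(ℙ : Measure Ω)) ∧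
    ‖∫ ω, ((Xhat ω + lam ω • gradient I (Xhat ω)) - Xhat ω) ∂(ℙ : Measure Ω)‖ ≤
      L * |∫ ω, lam ω ∂(ℙ : Measure Ω)| +
        M * Real.sqrt (∫ ω, ‖Xhat ω - x‖ ^ 2 ∂(ℙ : Measure Ω)) * Real.sqrt (∫ ω, (lam ω) ^ 2 ∂(ℙ : Measure Ω)) := by
  have hg1 : ContDiff ℝ 1 (gradient I) := by
    have h1 : ContDiff ℝ 1 (fderiv ℝ I) := hI.fderiv_right (by norm_num)
    exact (InnerProductSpace.toDual ℝ (EuclideanSpace ℝ (Fin d))).symm.contDiff.comp h1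
  have hgdiff : Differentiable ℝ (gradient I) := hg1.differentiable one_ne_zero
  have hgc : Continuous (gradient I) := hg1.continuous
  have hL0 : 0 ≤ L := le_trans (norm_nonneg _) (hgrad 0)
  have hM0 : 0 ≤ M := le_trans (norm_nonneg _) (hHess 0)
  have hlip : ∀ z : EuclideanSpace ℝ (Fin d), ‖gradient I z - gradient I x‖ ≤ M * ‖z - x‖ :=
    fun z =>
    Convex.norm_image_sub_le_of_norm_fderiv_le (fun w _ => hgdiff w) (fun w _ => hHess w)
      convex_univ (Set.mem_univ x) (Set.mem_univ z)
  have hXm : AEStronglyMeasurable Xhat ℙ := hXhat.aestronglyMeasurable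
  have hlm : AEStronglyMeasurable lam ℙ := hlam.aestronglyMeasurable
  have hgXm : AEStronglyMeasurable (fun ω => gradient I (Xhat ω)) ℙ :=
    hgc.comp_aestronglyMeasurable hXm
  have hlam2 : Integrable (fun ω => (lam ω) ^ 2) ℙ := hlam.integrable_sq
  have hlam1 : Integrable lam ℙ := hlam.integrable one_le_two
  have hXx : MemLp (fun ω => Xhat ω - x) 2 ℙ := hXhat.sub (memLp_const x)
  have hXx2 : Integrable (fun ω => ‖Xhat ω - x‖ ^ 2) ℙ := by
    simpa using hXx.norm.integrable_sq
  have hprod0 : Integrable (fun ω => lam ω * ‖Xhat ω - x‖) ℙ := by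
    have := (MemLp.smul (p := 2) (q := 2) (r := 1) hXx.norm hlam).integrable le_rfl
    simpa [Pi.smul_apply, smul_eq_mul, Pi.mul_def] using this
  have hprod : Integrable (fun ω => ‖Xhat ω - x‖ * |lam ω|) ℙ := by
    have := hprod0.abs
    simpa [abs_mul, abs_of_nonneg (norm_nonneg _), mul_comm] using this
  simp only [add_sub_cancel_left]
  constructor
  · have hb : ∫ ω, ‖lam ω • gradient I (Xhat ω)‖ ^ 2 ∂ℙ ≤ ∫ ω, L ^ 2 * (lam ω) ^ 2 ∂ℙ := by
      refine integral_mono_of_nonneg (ae_of_all _ fun ω => by positivity) (hlam2.const_mul _)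
        (ae_of_all _ fun ω => ?_)
      show ‖lam ω • gradient I (Xhat ω)‖ ^ 2 ≤ L ^ 2 * lam ω ^ 2
      have h : ‖lam ω • gradient I (Xhat ω)‖ = |lam ω| * ‖gradient I (Xhat ω)‖ := by
        rw [norm_smul, Real.norm_eq_abs]
      rw [h, mul_pow, sq_abs, mul_comm]
      exact mul_le_mul_of_nonneg_right
        (pow_le_pow_left₀ (norm_nonneg _) (hgrad _) 2) (sq_nonneg _)
    simpa [integral_const_mul] using hb
  · set Y1 : Ω → EuclideanSpace ℝ (Fin d) := fun ω => lam ω • (gradient I (Xhat ω) - gradient I x)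
      with hY1def
    set Y2 : Ω → EuclideanSpace ℝ (Fin d) := fun ω => lam ω • gradient I x with hY2def
    have hY1norm : ∀ ω, ‖Y1 ω‖ ≤ M * (‖Xhat ω - x‖ * |lam ω|) := by
      intro ω
      have h : ‖Y1 ω‖ = |lam ω| * ‖gradient I (Xhat ω) - gradient I x‖ := by
        rw [hY1def]; simp [norm_smul]
      rw [h]
      calc |lam ω| * ‖gradient I (Xhat ω) - gradient I x‖
          ≤ |lam ω| * (M * ‖Xhat ω - x‖) := mul_le_mul_of_nonneg_left (hlip _) (abs_nonneg _)
        _ = M * (‖Xhat ω - x‖ * |lam ω|) := by ring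
    have hY1m : AEStronglyMeasurable Y1 ℙ := hlm.smul (hgXm.sub aestronglyMeasurable_const)
    have hY1int : Integrable Y1 ℙ :=
      Integrable.mono' (hprod.const_mul M) hY1m (ae_of_all _ hY1norm)
    have hY2int : Integrable Y2 ℙ := hlam1.smul_const (gradient I x)
    have hsplit : (fun ω => lam ω • gradient I (Xhat ω)) = fun ω => Y1 ω + Y2 ω := by
      funext ω; rw [hY1def, hY2def]; simp [smul_sub]
    rw [hsplit, integral_add hY1int hY2int]
    have h2 : ‖∫ ω, Y2 ω ∂ℙ‖ ≤ L * |∫ ω, lam ω ∂ℙ| := by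
      rw [hY2def, integral_smul_const, norm_smul, Real.norm_eq_abs, mul_comm]
      exact mul_le_mul_of_nonneg_right (hgrad x) (abs_nonneg _)
    have hCS : ∫ ω, ‖Xhat ω - x‖ * |lam ω| ∂ℙ ≤
        Real.sqrt (∫ ω, ‖Xhat ω - x‖ ^ 2 ∂ℙ) * Real.sqrt (∫ ω, (lam ω) ^ 2 ∂ℙ) := by
      have h2' : (ENNReal.ofReal (2:ℝ)) = 2 := by norm_num
      have := integral_mul_le_Lp_mul_Lq_of_nonneg (μ := (ℙ : Measure Ω))
        (p := 2) (q := 2) Real.HolderConjugate.two_two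
        (f := fun ω => ‖Xhat ω - x‖) (g := fun ω => |lam ω|)
        (ae_of_all _ fun ω => norm_nonneg _) (ae_of_all _ fun ω => abs_nonneg _)
        (by rw [h2']; exact hXx.norm) (by rw [h2']; simpa using hlam.norm)
      calc ∫ ω, ‖Xhat ω - x‖ * |lam ω| ∂ℙ
          ≤ (∫ ω, ‖Xhat ω - x‖ ^ (2:ℝ) ∂ℙ) ^ ((1:ℝ)/2) * (∫ ω, |lam ω| ^ (2:ℝ) ∂ℙ) ^ ((1:ℝ)/2) :=
            this
        _ = Real.sqrt (∫ ω, ‖Xhat ω - x‖ ^ 2 ∂ℙ) * Real.sqrt (∫ ω, (lam ω) ^ 2 ∂ℙ) := by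
            rw [Real.sqrt_eq_rpow, Real.sqrt_eq_rpow]
            congr 2
            · exact integral_congr_ae (ae_of_all _ fun ω => Real.rpow_two _)
            · exact integral_congr_ae (ae_of_all _ fun ω => by
                simp [Real.rpow_two, sq_abs])
    have h1 : ‖∫ ω, Y1 ω ∂ℙ‖ ≤
        M * Real.sqrt (∫ ω, ‖Xhat ω - x‖ ^ 2 ∂ℙ) * Real.sqrt (∫ ω, (lam ω) ^ 2 ∂ℙ) := by
      calc ‖∫ ω, Y1 ω ∂ℙ‖ ≤ ∫ ω, ‖Y1 ω‖ ∂ℙ := norm_integral_le_integral_norm _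
        _ ≤ ∫ ω, M * (‖Xhat ω - x‖ * |lam ω|) ∂ℙ :=
            integral_mono_of_nonneg (ae_of_all _ fun ω => norm_nonneg _)
              (hprod.const_mul M) (ae_of_all _ hY1norm)
        _ = M * ∫ ω, ‖Xhat ω - x‖ * |lam ω| ∂ℙ := integral_const_mul _ _
        _ ≤ M * (Real.sqrt (∫ ω, ‖Xhat ω - x‖ ^ 2 ∂ℙ) * Real.sqrt (∫ ω, (lam ω) ^ 2 ∂ℙ)) :=
            mul_le_mul_of_nonneg_left hCS hM0
        _ = M * Real.sqrt (∫ ω, ‖Xhat ω - x‖ ^ 2 ∂ℙ) * Real.sqrt (∫ ω, (lam ω) ^ 2 ∂ℙ) := by ring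
    calc ‖(∫ ω, Y1 ω ∂ℙ) + ∫ ω, Y2 ω ∂ℙ‖ ≤ ‖∫ ω, Y1 ω ∂ℙ‖ + ‖∫ ω, Y2 ω ∂ℙ‖ := norm_add_le _ _
      _ ≤ _ := by linarith
end

section
/- Let I : ℝ^d → ℝ be differentiable, let f̄, g : ℝ^d → ℝ^d, and let x, X̄ ∈ ℝ^d, h, ΔW, λ ∈ ℝ. Suppose the projected Euler step holds: X̄ = x + h·f̄(x) + ΔW·g(x) + λ·∇I(x) with I(X̄) = I(x), and suppose D ∈ ℝ^d satisfies the discrete-gradient property ⟨D, X̄ − x⟩ = I(X̄) − I(x) together with ⟨D, ∇I(x)⟩ ≠ 0. Then λ = −( h·⟨D, f̄(x)⟩ + ΔW·⟨D, g(x)⟩ ) / ⟨D, ∇I(x)⟩, and X̄ = x + h·S̄D + ΔW·T̄D, where S̄ = (f̄(x)∇I(x)ᵀ − ∇I(x)f̄(x)ᵀ)/⟨D, ∇I(x)⟩ and T̄ = (g(x)∇I(x)ᵀ − ∇I(x)g(x)ᵀ)/⟨D, ∇I(x)⟩ are skew-symmetric matrices. (The projected Euler method with projection direction ∇I(x) coincides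 with a discrete gradient method in skew-gradient form.) -/
open scoped RealInnerProductSpace
open Matrix

lemma vecMulVec_mulVec {d : ℕ} (a b v : Fin d → ℝ) :
    (Matrix.vecMulVec a b).mulVec v = (b ⬝ᵥ v) • a := by
  funext i
  simp [Matrix.mulVec, Matrix.vecMulVec_apply, dotProduct, Finset.sum_mul, Finset.mul_sum]; exact Finset.sum_congr rfl fun j _ => by ring

lemma transpose_vecMulVec {d : ℕ} (a b : Fin d → ℝ) :
    (Matrix.vecMulVec a b)ᵀ = Matrix.vecMulVec b a := by
  ext i j; simp [Matrix.vecMulVec_apply, mul_comm]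

lemma inner_eq_dot {d : ℕ} (D v : EuclideanSpace ℝ (Fin d)) :
    ⟪D, v⟫ = (WithLp.equiv 2 (Fin d → ℝ) v) ⬝ᵥ (WithLp.equiv 2 (Fin d → ℝ) D) := by
  simp [PiLp.inner_apply, dotProduct, RCLike.inner_apply, mul_comm]

/-- The projected Euler method with projection direction `∇I(x)` coincides with a discrete
gradient method in skew-gradient form: the projection parameter is
`λ = −(h⟨D, f̄(x)⟩ + ΔW⟨D, g(x)⟩)/⟨D, ∇I(x)⟩` and
`X̄ = x + h S̄D + ΔW T̄D` with skew-symmetric `S̄, T̄`. -/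
theorem projected_euler_is_discrete_gradient (d : ℕ)
    (I : EuclideanSpace ℝ (Fin d) → ℝ) (hI : Differentiable ℝ I)
    (fbar g : EuclideanSpace ℝ (Fin d) → EuclideanSpace ℝ (Fin d))
    (x Xbar : EuclideanSpace ℝ (Fin d)) (h ΔW lam : ℝ)
    (hstep : Xbar = x + h • fbar x + ΔW • g x + lam • gradient I x)
    (hcons : I Xbar = I x)
    (D : EuclideanSpace ℝ (Fin d))
    (hD : ⟪D, Xbar - x⟫ = I Xbar - I x)
    (hDg : ⟪D, gradient I x⟫ ≠ 0) :
    lam = -(h * ⟪D, fbar x⟫ + ΔW * ⟪D, g x⟫) / ⟪D, gradient I x⟫ ∧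
    ((⟪D, gradient I x⟫⁻¹ •
        (Matrix.vecMulVec (fbar x) (WithLp.equiv 2 (Fin d → ℝ) (gradient I x)) -
          Matrix.vecMulVec (WithLp.equiv 2 (Fin d → ℝ) (gradient I x)) (fbar x)))ᵀ =
      -(⟪D, gradient I x⟫⁻¹ •
        (Matrix.vecMulVec (fbar x) (WithLp.equiv 2 (Fin d → ℝ) (gradient I x)) -
          Matrix.vecMulVec (WithLp.equiv 2 (Fin d → ℝ) (gradient I x)) (fbar x)))) ∧
    ((⟪D, gradient I x⟫⁻¹ •
        (Matrix.vecMulVec (g x) (WithLp.equiv 2 (Fin d → ℝ) (gradient I x)) -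
          Matrix.vecMulVec (WithLp.equiv 2 (Fin d → ℝ) (gradient I x)) (g x)))ᵀ =
      -(⟪D, gradient I x⟫⁻¹ •
        (Matrix.vecMulVec (g x) (WithLp.equiv 2 (Fin d → ℝ) (gradient I x)) -
          Matrix.vecMulVec (WithLp.equiv 2 (Fin d → ℝ) (gradient I x)) (g x)))) ∧
    Xbar = x +
      h • (WithLp.equiv 2 (Fin d → ℝ)).symm
        ((⟪D, gradient I x⟫⁻¹ •
          (Matrix.vecMulVec (fbar x) (WithLp.equiv 2 (Fin d → ℝ) (gradient I x)) -
            Matrix.vecMulVec (WithLp.equiv 2 (Fin d → ℝ) (gradient I x)) (fbar x))).mulVec D) +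
      ΔW • (WithLp.equiv 2 (Fin d → ℝ)).symm
        ((⟪D, gradient I x⟫⁻¹ •
          (Matrix.vecMulVec (g x) (WithLp.equiv 2 (Fin d → ℝ) (gradient I x)) -
            Matrix.vecMulVec (WithLp.equiv 2 (Fin d → ℝ) (gradient I x)) (g x))).mulVec D) := by
  set c : ℝ := ⟪D, gradient I x⟫ with hc
  have key : h * ⟪D, fbar x⟫ + ΔW * ⟪D, g x⟫ + lam * c = 0 := by
    have := hD
    rw [hcons, hstep] at this
    simp only [add_sub_cancel_left, sub_self] at this
    rw [show x + h • fbar x + ΔW • g x + lam • gradient I x - x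
        = h • fbar x + ΔW • g x + lam • gradient I x by abel] at this
    simpa [inner_add_right, inner_smul_right, hc] using this
  have hlam : lam = -(h * ⟪D, fbar x⟫ + ΔW * ⟪D, g x⟫) / c := by
    rw [eq_div_iff hDg]
    linarith [key]
  refine ⟨hlam, ?_, ?_, ?_⟩
  · rw [Matrix.transpose_smul, Matrix.transpose_sub, transpose_vecMulVec, transpose_vecMulVec]
    rw [← smul_neg, neg_sub]
  · rw [Matrix.transpose_smul, Matrix.transpose_sub, transpose_vecMulVec, transpose_vecMulVec]
    rw [← smul_neg, neg_sub]
  · have hdotgrad : (WithLp.equiv 2 (Fin d → ℝ) (gradient I x)) ⬝ᵥ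
        (WithLp.equiv 2 (Fin d → ℝ) D) = c := (inner_eq_dot D (gradient I x)).symm
    have hdotf : (WithLp.equiv 2 (Fin d → ℝ) (fbar x)) ⬝ᵥ
        (WithLp.equiv 2 (Fin d → ℝ) D) = ⟪D, fbar x⟫ := (inner_eq_dot D (fbar x)).symm
    have hdotg2 : (WithLp.equiv 2 (Fin d → ℝ) (g x)) ⬝ᵥ
        (WithLp.equiv 2 (Fin d → ℝ) D) = ⟪D, g x⟫ := (inner_eq_dot D (g x)).symm
    rw [hstep, hlam]
    rw [Matrix.smul_mulVec, Matrix.smul_mulVec, Matrix.sub_mulVec,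
      Matrix.sub_mulVec, vecMulVec_mulVec, vecMulVec_mulVec, vecMulVec_mulVec,
      vecMulVec_mulVec]
    ext i
    simp only [PiLp.add_apply, PiLp.smul_apply, WithLp.equiv_symm_apply, PiLp.toLp_apply, Pi.smul_apply,
      Pi.sub_apply, smul_eq_mul]
    simp only [dotProduct, PiLp.inner_apply, RCLike.inner_apply, conj_trivial,
      WithLp.equiv_apply, mul_comm] at hc hDg ⊢
    rw [hc] at hDg ⊢
    field_simp
    ring
end
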